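/- arXiv:2101.09082 — 2 statements merged into one kernel-verified Lean document; each statement's English description precedes it below -/
import Mathlib

section
/- Let Y = ΦX + E with Φ ∈ ℂ^{M×N}, X ∈ ℂ^{N×L} s row-sparse, and E ∈ ℂ^{M×L}. Let X̃ ∈ ℂ^{N×L} satisfy ΦX̃ = Y, let T ⊆ {1,…,N} with |T| = t be such that Φ_T*Φ_T is invertible, and let W̄ be the feedback of X̃: W̄_(T^c) = 0 and W̄_{(T)} = X̃_{(T)} + (Φ_T*Φ_T)⁻¹Φ_T*Φ_{T^c}X̃_{(T^c)}. If δ_{s+t} < 1 is a restricted isometry constant of order s+t for Φ and δ_t is a restricted isometry constant of order t for Φ, then ‖X − W̄‖_F ≤ ‖X_(T^c)‖_F / √(1 − δ_{s+t}²) + √(1+δ_t)·‖E‖_F / (1 − δ_{s+t}). -/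
set_option maxHeartbeats 1000000

open Matrix BigOperators

/-- Frobenius norm of a complex matrix. -/
noncomputable def frobNorm {m n : Type*} [Fintype m] [Fintype n] (A : Matrix m n ℂ) : ℝ :=
  Real.sqrt (∑ i, ∑ j, ‖A i j‖ ^ 2)

open scoped Classical in
/-- The row support of a matrix: indices of its nonzero rows. -/
noncomputable def rowSupp {N L : ℕ} (X : Matrix (Fin N) (Fin L) ℂ) : Finset (Fin N) :=
  Finset.univ.filter (fun i => X i ≠ 0)

/-- `X_(T)`: the matrix obtained from `X` by zeroing every row with index outside `T`. -/
def rowRestrict {N L : ℕ} (T : Finset (Fin N)) (X : Matrix (Fin N) (Fin L) ℂ) :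
    Matrix (Fin N) (Fin L) ℂ :=
  fun i j => if i ∈ T then X i j else 0

/-- Euclidean norm of a complex vector. -/
noncomputable def vecNorm {ι : Type*} [Fintype ι] (v : ι → ℂ) : ℝ :=
  Real.sqrt (∑ i, ‖v i‖ ^ 2)

/-- `Φ_T`: the submatrix of columns of `Φ` indexed by `T`. -/
def colSub {M N : ℕ} (Φ : Matrix (Fin M) (Fin N) ℂ) (T : Finset (Fin N)) :
    Matrix (Fin M) {x // x ∈ T} ℂ :=
  fun i j => Φ i j.val

/-- `X_{(T)}`: the submatrix of rows of `X` indexed by `T`. -/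
def rowSub {N L : ℕ} (T : Finset (Fin N)) (X : Matrix (Fin N) (Fin L) ℂ) :
    Matrix {x // x ∈ T} (Fin L) ℂ :=
  fun i j => X i.val j

/-- The set of values `‖R v‖` over unit vectors `v` (the "singular value range"). -/
noncomputable def sigmaSet {L : ℕ} (R : Matrix (Fin L) (Fin L) ℂ) : Set ℝ :=
  {c | ∃ v : Fin L → ℂ, vecNorm v = 1 ∧ c = vecNorm (R.mulVec v)}

/-- The largest singular value of `R`. -/
noncomputable def sigmaMax {L : ℕ} (R : Matrix (Fin L) (Fin L) ℂ) : ℝ :=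
  sSup (sigmaSet R)

/-- The smallest singular value of `R` (for invertible `R`). -/
noncomputable def sigmaMin {L : ℕ} (R : Matrix (Fin L) (Fin L) ℂ) : ℝ :=
  sInf (sigmaSet R)

/-- Spectral (operator) norm of a square complex matrix. -/
noncomputable def specNorm {ι : Type*} [Fintype ι] (A : Matrix ι ι ℂ) : ℝ :=
  sSup {c | ∃ v : ι → ℂ, vecNorm v = 1 ∧ c = vecNorm (A.mulVec v)}

/-- `δ` is a restricted isometry constant (RIC) of order `t` for `A`, relative to matrices with
`L` columns: `(1-δ)‖Z‖_F² ≤ ‖AZ‖_F² ≤ (1+δ)‖Z‖_F²` for every `t` row-sparse `Z`. -/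
def IsRIC {M N : ℕ} (L : ℕ) (A : Matrix (Fin M) (Fin N) ℂ) (t : ℕ) (δ : ℝ) : Prop :=
  ∀ Z : Matrix (Fin N) (Fin L) ℂ, (rowSupp Z).card ≤ t →
    (1 - δ) * frobNorm Z ^ 2 ≤ frobNorm (A * Z) ^ 2 ∧
      frobNorm (A * Z) ^ 2 ≤ (1 + δ) * frobNorm Z ^ 2

/-- `γ` is a preconditioned restricted isometry constant (P-RIC) of order `t` for `Φ`:
`(1-γ)‖Z‖_F² ≤ Re tr((ΦZ)* (ΦΦ*)⁻¹ (ΦZ))` for every `t` row-sparse `Z`. -/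
def IsPRIC {M N : ℕ} (L : ℕ) (Φ : Matrix (Fin M) (Fin N) ℂ) (t : ℕ) (γ : ℝ) : Prop :=
  ∀ Z : Matrix (Fin N) (Fin L) ℂ, (rowSupp Z).card ≤ t →
    (1 - γ) * frobNorm Z ^ 2 ≤ (Matrix.trace ((Φ * Z)ᴴ * ((Φ * Φᴴ)⁻¹ * (Φ * Z)))).re

/-- `θ` is an upper restricted isometry constant of order `t` for `A`:
`‖AZ‖_F² ≤ (1+θ)‖Z‖_F²` for every `t` row-sparse `Z`. -/
def IsUpperRIC {M N : ℕ} (L : ℕ) (A : Matrix (Fin M) (Fin N) ℂ) (t : ℕ) (θ : ℝ) : Prop :=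
  ∀ Z : Matrix (Fin N) (Fin L) ℂ, (rowSupp Z).card ≤ t →
    frobNorm (A * Z) ^ 2 ≤ (1 + θ) * frobNorm Z ^ 2

/-- The least-squares feedback of `X` on the index set `T`:
rows outside `T` are zero and on `T` it equals
`X_{(T)} + (Φ_T* Φ_T)⁻¹ Φ_T* Φ_{T^c} X_{(T^c)}`. -/
noncomputable def feedback {M N L : ℕ} (Φ : Matrix (Fin M) (Fin N) ℂ) (T : Finset (Fin N))
    (X : Matrix (Fin N) (Fin L) ℂ) : Matrix (Fin N) (Fin L) ℂ :=
  fun i j =>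
    if h : i ∈ T then
      (rowSub T X +
        ((colSub Φ T)ᴴ * colSub Φ T)⁻¹ * (colSub Φ T)ᴴ *
          (colSub Φ Tᶜ * rowSub Tᶜ X)) ⟨i, h⟩ j
    else 0

/-! ### Auxiliary machinery -/

section Aux

/-- Embedding of matrices into a Euclidean space. -/
noncomputable def emb {N L : ℕ} (A : Matrix (Fin N) (Fin L) ℂ) :
    EuclideanSpace ℂ (Fin N × Fin L) :=
  WithLp.toLp 2 fun p : Fin N × Fin L => A p.1 p.2

lemma frob_emb {N L : ℕ} (A : Matrix (Fin N) (Fin L) ℂ) : frobNorm A = ‖emb A‖ := by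
  rw [frobNorm, EuclideanSpace.norm_eq, Fintype.sum_prod_type]; rfl

/-- Real part of the Frobenius inner product. -/
noncomputable def ip {N L : ℕ} (A B : Matrix (Fin N) (Fin L) ℂ) : ℝ :=
  (inner ℂ (emb A) (emb B) : ℂ).re

lemma frob_sq {N L : ℕ} (A : Matrix (Fin N) (Fin L) ℂ) : frobNorm A ^ 2 = ip A A := by
  rw [frob_emb, ip, ← inner_self_eq_norm_sq (𝕜 := ℂ)]; rfl

lemma frobNorm_nonneg {N L : ℕ} (A : Matrix (Fin N) (Fin L) ℂ) : 0 ≤ frobNorm A :=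
  Real.sqrt_nonneg _

lemma frob_eq_zero {N L : ℕ} {A : Matrix (Fin N) (Fin L) ℂ} (h : frobNorm A = 0) : A = 0 := by
  rw [frob_emb, norm_eq_zero] at h
  ext i j
  exact congrArg (fun x => x.ofLp (i, j)) h

lemma ip_comm {N L : ℕ} (A B : Matrix (Fin N) (Fin L) ℂ) : ip A B = ip B A := by
  rw [ip, ip, ← inner_conj_symm]
  exact (Complex.conj_re _)

lemma ip_add_left {N L : ℕ} (A B C : Matrix (Fin N) (Fin L) ℂ) :
    ip (A + B) C = ip A C + ip B C := by
  rw [ip, show emb (A + B) = emb A + emb B from rfl, inner_add_left, Complex.add_re, ip, ip]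

lemma ip_add_right {N L : ℕ} (A B C : Matrix (Fin N) (Fin L) ℂ) :
    ip A (B + C) = ip A B + ip A C := by
  rw [ip, show emb (B + C) = emb B + emb C from rfl, inner_add_right, Complex.add_re, ip, ip]

lemma ip_rsmul_left {N L : ℕ} (c : ℝ) (A B : Matrix (Fin N) (Fin L) ℂ) :
    ip ((c : ℂ) • A) B = c * ip A B := by
  rw [ip, show emb ((c : ℂ) • A) = (c : ℂ) • emb A from rfl, inner_smul_left, Complex.conj_ofReal]
  simp [Complex.mul_re, ip]

lemma ip_rsmul_right {N L : ℕ} (c : ℝ) (A B : Matrix (Fin N) (Fin L) ℂ) :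
    ip A ((c : ℂ) • B) = c * ip A B := by
  rw [ip, show emb ((c : ℂ) • B) = (c : ℂ) • emb B from rfl, inner_smul_right]
  simp [Complex.mul_re, ip]

lemma ip_CS {N L : ℕ} (A B : Matrix (Fin N) (Fin L) ℂ) :
    ip A B ≤ frobNorm A * frobNorm B := by
  rw [ip, frob_emb, frob_emb]
  exact re_inner_le_norm (𝕜 := ℂ) _ _

lemma ip_neg_left {N L : ℕ} (A B : Matrix (Fin N) (Fin L) ℂ) : ip (-A) B = -ip A B := by
  rw [ip, show emb (-A) = -emb A from rfl, inner_neg_left, Complex.neg_re, ip]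

lemma frob_neg {N L : ℕ} (A : Matrix (Fin N) (Fin L) ℂ) : frobNorm (-A) = frobNorm A := by
  rw [frob_emb, frob_emb, show emb (-A) = -emb A from rfl, norm_neg]

lemma ip_CS' {N L : ℕ} (A B : Matrix (Fin N) (Fin L) ℂ) :
    -(frobNorm A * frobNorm B) ≤ ip A B := by
  have h := ip_CS (-A) B
  rw [ip_neg_left, frob_neg] at h
  linarith

lemma ip_zero_left {N L : ℕ} (B : Matrix (Fin N) (Fin L) ℂ) : ip 0 B = 0 := by
  rw [ip, show emb (0 : Matrix (Fin N) (Fin L) ℂ) = 0 from rfl, inner_zero_left]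
  rfl

lemma ip_zero_right {N L : ℕ} (B : Matrix (Fin N) (Fin L) ℂ) : ip B 0 = 0 := by
  rw [ip, show emb (0 : Matrix (Fin N) (Fin L) ℂ) = 0 from rfl, inner_zero_right]
  rfl

lemma frob_zero {N L : ℕ} : frobNorm (0 : Matrix (Fin N) (Fin L) ℂ) = 0 := by
  simp [frobNorm]

lemma triple_swap {α β γ M : Type*} [Fintype α] [Fintype β] [Fintype γ] [AddCommMonoid M]
    (f : α → β → γ → M) :
    ∑ a, ∑ b, ∑ c, f a b c = ∑ c, ∑ b, ∑ a, f a b c :=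
  calc ∑ a, ∑ b, ∑ c, f a b c
      = ∑ a, ∑ c, ∑ b, f a b c := Finset.sum_congr rfl fun _ _ => Finset.sum_comm
    _ = ∑ c, ∑ a, ∑ b, f a b c := Finset.sum_comm
    _ = ∑ c, ∑ b, ∑ a, f a b c := Finset.sum_congr rfl fun _ _ => Finset.sum_comm

lemma inner_emb {N L : ℕ} (A B : Matrix (Fin N) (Fin L) ℂ) :
    (inner ℂ (emb A) (emb B) : ℂ) = ∑ i, ∑ j, (starRingEnd ℂ) (A i j) * B i j := by
  rw [PiLp.inner_apply, Fintype.sum_prod_type]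
  refine Finset.sum_congr rfl fun i _ => Finset.sum_congr rfl fun j _ => ?_
  show inner ℂ (A i j) (B i j) = _
  rw [RCLike.inner_apply]; ring

lemma adjoint_emb {M N L : ℕ} (P : Matrix (Fin M) (Fin N) ℂ) (A : Matrix (Fin N) (Fin L) ℂ)
    (B : Matrix (Fin M) (Fin L) ℂ) :
    (inner ℂ (emb (P * A)) (emb B) : ℂ) = inner ℂ (emb A) (emb (Pᴴ * B)) := by
  rw [inner_emb, inner_emb]
  simp only [Matrix.mul_apply, Matrix.conjTranspose_apply, map_sum, _root_.map_mul,
    Finset.sum_mul, Finset.mul_sum]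
  rw [triple_swap (f := fun m l n => (starRingEnd ℂ) (P m n) * (starRingEnd ℂ) (A n l) * B m l)]
  refine Finset.sum_congr rfl fun n _ => Finset.sum_congr rfl fun l _ =>
    Finset.sum_congr rfl fun m _ => ?_
  simp only [RCLike.star_def]
  ring

/-- Row support contained in a set. -/
def SuppIn {N L : ℕ} (Z : Matrix (Fin N) (Fin L) ℂ) (S : Finset (Fin N)) : Prop :=
  ∀ i ∉ S, ∀ j, Z i j = 0

lemma card_rowSupp_le {N L : ℕ} {Z : Matrix (Fin N) (Fin L) ℂ} {S : Finset (Fin N)}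
    (h : SuppIn Z S) : rowSupp Z ⊆ S := by
  classical
  intro i hi
  rw [rowSupp, Finset.mem_filter] at hi
  by_contra hiS
  exact hi.2 (funext fun j => h i hiS j)

lemma ip_disjoint {N L : ℕ} {Z1 Z2 : Matrix (Fin N) (Fin L) ℂ} {S : Finset (Fin N)}
    (h1 : SuppIn Z1 S) (h2 : SuppIn Z2 Sᶜ) : ip Z1 Z2 = 0 := by
  have : (inner ℂ (emb Z1) (emb Z2) : ℂ) = 0 := by
    rw [PiLp.inner_apply]
    refine Finset.sum_eq_zero fun p _ => ?_
    by_cases hp : p.1 ∈ S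
    · rw [show emb Z2 p = Z2 p.1 p.2 from rfl, h2 p.1 (by simpa using hp) p.2]
      simp
    · rw [show emb Z1 p = Z1 p.1 p.2 from rfl, h1 p.1 hp p.2]
      simp
  rw [ip, this, Complex.zero_re]

lemma quad_bound {M N L k : ℕ} {Φ : Matrix (Fin M) (Fin N) ℂ} {δ : ℝ}
    (hRIC : IsRIC L Φ k δ) {Z : Matrix (Fin N) (Fin L) ℂ} (hZ : (rowSupp Z).card ≤ k) :
    |ip Z Z - ip (Φ * Z) (Φ * Z)| ≤ δ * ip Z Z := by
  obtain ⟨h1, h2⟩ := hRIC Z hZ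
  rw [← frob_sq, ← frob_sq]
  rw [abs_le]
  constructor <;> nlinarith [frob_sq Z, frob_sq (Φ * Z)]

lemma ip_expand {N L : ℕ} (c d : ℝ) (A B : Matrix (Fin N) (Fin L) ℂ) :
    ip ((c : ℂ) • A + (d : ℂ) • B) ((c : ℂ) • A + (d : ℂ) • B) =
      c ^ 2 * ip A A + 2 * (c * d) * ip A B + d ^ 2 * ip B B := by
  simp only [ip_add_left, ip_add_right, ip_rsmul_left, ip_rsmul_right]
  rw [ip_comm B A]
  ring

lemma suppIn_combo {N L : ℕ} {Z1 Z2 : Matrix (Fin N) (Fin L) ℂ} {S : Finset (Fin N)}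
    (h1 : SuppIn Z1 S) (h2 : SuppIn Z2 S) (c d : ℂ) : SuppIn (c • Z1 + d • Z2) S := by
  intro i hi j
  simp [Matrix.add_apply, Matrix.smul_apply, h1 i hi j, h2 i hi j]

lemma bilinear_RIC {M N L k : ℕ} {Φ : Matrix (Fin M) (Fin N) ℂ} {δ : ℝ} (hδ : 0 ≤ δ)
    (hRIC : IsRIC L Φ k δ) {S : Finset (Fin N)} (hS : S.card ≤ k)
    {Z1 Z2 : Matrix (Fin N) (Fin L) ℂ} (h1 : SuppIn Z1 S) (h2 : SuppIn Z2 S) :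
    ip Z1 Z2 - ip (Φ * Z1) (Φ * Z2) ≤ δ * (frobNorm Z1 * frobNorm Z2) := by
  by_cases hz1 : frobNorm Z1 = 0
  · rw [frob_eq_zero hz1]
    rw [Matrix.mul_zero, ip_zero_left, ip_zero_left, frob_zero]
    simp
  by_cases hz2 : frobNorm Z2 = 0
  · rw [frob_eq_zero hz2]
    rw [Matrix.mul_zero, ip_zero_right, ip_zero_right, frob_zero]
    simp
  have ha : 0 < frobNorm Z1 := lt_of_le_of_ne (frobNorm_nonneg Z1) (Ne.symm hz1)
  have hb : 0 < frobNorm Z2 := lt_of_le_of_ne (frobNorm_nonneg Z2) (Ne.symm hz2)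
  set a := frobNorm Z1
  set b := frobNorm Z2
  set c := Real.sqrt (b / a) with hcdef
  have hc : 0 < c := Real.sqrt_pos.mpr (div_pos hb ha)
  have hc2 : c ^ 2 = b / a := Real.sq_sqrt (div_pos hb ha).le
  set Wp := (c : ℂ) • Z1 + ((c⁻¹ : ℝ) : ℂ) • Z2 with hWp
  set Wm := (c : ℂ) • Z1 + ((-c⁻¹ : ℝ) : ℂ) • Z2 with hWm
  have hWpS : SuppIn Wp S := suppIn_combo h1 h2 _ _
  have hWmS : SuppIn Wm S := suppIn_combo h1 h2 _ _
  have hcardp : (rowSupp Wp).card ≤ k :=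
    le_trans (Finset.card_le_card (card_rowSupp_le hWpS)) hS
  have hcardm : (rowSupp Wm).card ≤ k :=
    le_trans (Finset.card_le_card (card_rowSupp_le hWmS)) hS
  have hQp := quad_bound hRIC hcardp
  have hQm := quad_bound hRIC hcardm
  have hmulp : Φ * Wp = (c : ℂ) • (Φ * Z1) + ((c⁻¹ : ℝ) : ℂ) • (Φ * Z2) := by
    rw [hWp, Matrix.mul_add, Matrix.mul_smul, Matrix.mul_smul]
  have hmulm : Φ * Wm = (c : ℂ) • (Φ * Z1) + ((-c⁻¹ : ℝ) : ℂ) • (Φ * Z2) := by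
    rw [hWm, Matrix.mul_add, Matrix.mul_smul, Matrix.mul_smul]
  have hEp : ip Wp Wp = c ^ 2 * ip Z1 Z1 + 2 * (c * c⁻¹) * ip Z1 Z2 + (c⁻¹) ^ 2 * ip Z2 Z2 :=
    ip_expand c c⁻¹ Z1 Z2
  have hEm : ip Wm Wm = c ^ 2 * ip Z1 Z1 + 2 * (c * (-c⁻¹)) * ip Z1 Z2 + (-c⁻¹) ^ 2 * ip Z2 Z2 :=
    ip_expand c (-c⁻¹) Z1 Z2
  have hEp' : ip (Φ * Wp) (Φ * Wp) = c ^ 2 * ip (Φ * Z1) (Φ * Z1)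
      + 2 * (c * c⁻¹) * ip (Φ * Z1) (Φ * Z2) + (c⁻¹) ^ 2 * ip (Φ * Z2) (Φ * Z2) := by
    rw [hmulp]; exact ip_expand c c⁻¹ _ _
  have hEm' : ip (Φ * Wm) (Φ * Wm) = c ^ 2 * ip (Φ * Z1) (Φ * Z1)
      + 2 * (c * (-c⁻¹)) * ip (Φ * Z1) (Φ * Z2) + (-c⁻¹) ^ 2 * ip (Φ * Z2) (Φ * Z2) := by
    rw [hmulm]; exact ip_expand c (-c⁻¹) _ _
  have hcc : c * c⁻¹ = 1 := mul_inv_cancel₀ hc.ne'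
  have hinv2 : (c⁻¹) ^ 2 = a / b := by
    rw [inv_pow, hc2]
    rw [inv_div]
  have h11 : ip Z1 Z1 = a ^ 2 := (frob_sq Z1).symm
  have h22 : ip Z2 Z2 = b ^ 2 := (frob_sq Z2).symm
  have key : 4 * (ip Z1 Z2 - ip (Φ * Z1) (Φ * Z2)) ≤ δ * ip Wp Wp + δ * ip Wm Wm := by
    rw [abs_le] at hQp hQm
    nlinarith [hQp.2, hQm.1, hEp, hEm, hEp', hEm', hcc]
  have e1 : c ^ 2 * a ^ 2 = a * b := by
    rw [hc2]
    field_simp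
  have e2 : (c⁻¹) ^ 2 * b ^ 2 = a * b := by
    rw [hinv2]
    field_simp
  have hsum : ip Wp Wp + ip Wm Wm = 4 * (a * b) := by
    rw [hEp, hEm, h11, h22]
    nlinarith [e1, e2, hcc]
  nlinarith [key, hsum, mul_nonneg (mul_nonneg hδ ha.le) hb.le]

lemma mul_rowRestrict {M N L : ℕ} (Φ : Matrix (Fin M) (Fin N) ℂ) (T : Finset (Fin N))
    (Z : Matrix (Fin N) (Fin L) ℂ) :
    Φ * rowRestrict T Z = colSub Φ T * rowSub T Z := by
  ext m l
  rw [Matrix.mul_apply, Matrix.mul_apply]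
  rw [show (Finset.univ : Finset {x // x ∈ T}) = T.attach from rfl]
  simp only [colSub, rowSub]
  rw [Finset.sum_attach T (fun i => Φ m i * Z i l)]
  rw [← Finset.sum_subset T.subset_univ]
  · exact Finset.sum_congr rfl fun i hi => by simp [rowRestrict, hi, colSub, rowSub]
  · intro i _ hi
    simp [rowRestrict, hi]

lemma rowRestrict_add_compl {N L : ℕ} (T : Finset (Fin N)) (Z : Matrix (Fin N) (Fin L) ℂ) :
    rowRestrict T Z + rowRestrict Tᶜ Z = Z := by
  ext i j
  by_cases h : i ∈ T <;> simp [rowRestrict, Matrix.add_apply, h, Finset.mem_compl]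

lemma mul_split {M N L : ℕ} (Φ : Matrix (Fin M) (Fin N) ℂ) (T : Finset (Fin N))
    (Z : Matrix (Fin N) (Fin L) ℂ) :
    Φ * Z = colSub Φ T * rowSub T Z + colSub Φ Tᶜ * rowSub Tᶜ Z := by
  conv_lhs => rw [← rowRestrict_add_compl T Z]
  rw [Matrix.mul_add, mul_rowRestrict, mul_rowRestrict]

lemma feedback_rowRestrict {M N L : ℕ} (Φ : Matrix (Fin M) (Fin N) ℂ) (T : Finset (Fin N))
    (Xt : Matrix (Fin N) (Fin L) ℂ) :
    rowRestrict T (feedback Φ T Xt) = feedback Φ T Xt := by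
  ext i j
  by_cases h : i ∈ T <;> simp [rowRestrict, feedback, h]

lemma rowSub_feedback {M N L : ℕ} (Φ : Matrix (Fin M) (Fin N) ℂ) (T : Finset (Fin N))
    (Xt : Matrix (Fin N) (Fin L) ℂ) :
    rowSub T (feedback Φ T Xt) =
      rowSub T Xt + ((colSub Φ T)ᴴ * colSub Φ T)⁻¹ * (colSub Φ T)ᴴ *
          (colSub Φ Tᶜ * rowSub Tᶜ Xt) := by
  ext ⟨i, hi⟩ j
  simp [rowSub, feedback, hi]

lemma normal_eq {M N L : ℕ} (Φ : Matrix (Fin M) (Fin N) ℂ)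
    (X : Matrix (Fin N) (Fin L) ℂ) (E : Matrix (Fin M) (Fin L) ℂ)
    (Y : Matrix (Fin M) (Fin L) ℂ) (hY : Y = Φ * X + E)
    (Xt : Matrix (Fin N) (Fin L) ℂ) (hfeas : Φ * Xt = Y)
    (T : Finset (Fin N))
    (hinv : IsUnit ((colSub Φ T)ᴴ * colSub Φ T)) :
    (colSub Φ T)ᴴ * (Φ * (X - feedback Φ T Xt) + E) = 0 := by
  have hAAinv : (colSub Φ T)ᴴ * colSub Φ T * ((colSub Φ T)ᴴ * colSub Φ T)⁻¹ = 1 :=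
    Matrix.mul_nonsing_inv _ ((Matrix.isUnit_iff_isUnit_det _).mp hinv)
  have h1 : Φ * (X - feedback Φ T Xt) + E = Φ * Xt - Φ * feedback Φ T Xt := by
    rw [Matrix.mul_sub, hfeas, hY]
    abel
  rw [h1]
  have h2 : Φ * feedback Φ T Xt =
      colSub Φ T * (rowSub T Xt + ((colSub Φ T)ᴴ * colSub Φ T)⁻¹ * (colSub Φ T)ᴴ *
          (colSub Φ Tᶜ * rowSub Tᶜ Xt)) := by
    conv_lhs => rw [← feedback_rowRestrict, mul_rowRestrict]
    rw [rowSub_feedback]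
  rw [h2, mul_split Φ T Xt]
  rw [Matrix.mul_add, Matrix.mul_sub, Matrix.mul_add]
  simp only [Matrix.mul_add, ← Matrix.mul_assoc, hAAinv, Matrix.one_mul]
  abel

lemma final_alg (δ C W V : ℝ) (hδ0 : 0 ≤ δ) (hδ1 : δ < 1) (hC : 0 ≤ C) (hW : 0 ≤ W)
    (hV : 0 ≤ V) (h : V ^ 2 ≤ (δ * V + C) ^ 2 + W ^ 2) :
    V ≤ W / Real.sqrt (1 - δ ^ 2) + C / (1 - δ) := by
  have h1δ : 0 < 1 - δ := by linarith
  have hpos : 0 < 1 - δ ^ 2 := by nlinarith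
  set r := Real.sqrt (1 - δ ^ 2) with hrdef
  have hr : 0 < r := Real.sqrt_pos.mpr hpos
  have hr2 : r ^ 2 = 1 - δ ^ 2 := Real.sq_sqrt hpos.le
  by_contra hcon
  push_neg at hcon
  set A := W / r with hAdef
  set B := C / (1 - δ) with hBdef
  have hA0 : 0 ≤ A := div_nonneg hW hr.le
  have hB0 : 0 ≤ B := div_nonneg hC h1δ.le
  have hA : A * r = W := div_mul_cancel₀ W hr.ne'
  have hB : B * (1 - δ) = C := div_mul_cancel₀ C h1δ.ne'
  have hlt : A + B < V := hcon
  rw [← hA, ← hB] at h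
  have h2 : V ^ 2 ≤ (δ * V + B * (1 - δ)) ^ 2 + A ^ 2 * (1 - δ ^ 2) := by
    calc V ^ 2 ≤ (δ * V + B * (1 - δ)) ^ 2 + (A * r) ^ 2 := h
      _ = (δ * V + B * (1 - δ)) ^ 2 + A ^ 2 * r ^ 2 := by ring
      _ = (δ * V + B * (1 - δ)) ^ 2 + A ^ 2 * (1 - δ ^ 2) := by rw [hr2]
  have hbr : 0 < (1 - δ ^ 2) * (V + A + B) - 2 * δ * (1 - δ) * B := by nlinarith
  nlinarith [mul_pos (sub_pos.mpr hlt) hbr, mul_nonneg (mul_nonneg hA0 hB0) h1δ.le]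

end Aux

/-- Lemma 8 of the paper (feedback error bound). -/
theorem stmt10 {M N L s t : ℕ} (Φ : Matrix (Fin M) (Fin N) ℂ)
    (X : Matrix (Fin N) (Fin L) ℂ) (E : Matrix (Fin M) (Fin L) ℂ)
    (hXs : (rowSupp X).card ≤ s)
    (Y : Matrix (Fin M) (Fin L) ℂ) (hY : Y = Φ * X + E)
    (Xt : Matrix (Fin N) (Fin L) ℂ) (hfeas : Φ * Xt = Y)
    (T : Finset (Fin N)) (hTcard : T.card = t)
    (hinv : IsUnit ((colSub Φ T)ᴴ * colSub Φ T))
    (δst δt : ℝ) (hδst0 : 0 ≤ δst) (hδst1 : δst < 1) (hδt0 : 0 ≤ δt)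
    (hRICst : IsRIC L Φ (s + t) δst) (hRICt : IsRIC L Φ t δt) :
    frobNorm (X - feedback Φ T Xt) ≤
      frobNorm (rowRestrict Tᶜ X) / Real.sqrt (1 - δst ^ 2) +
        Real.sqrt (1 + δt) * frobNorm E / (1 - δst) := by
  classical
  set v : Matrix (Fin N) (Fin L) ℂ := X - feedback Φ T Xt with hvdef
  set u : Matrix (Fin N) (Fin L) ℂ := rowRestrict T v with hudef
  set w : Matrix (Fin N) (Fin L) ℂ := rowRestrict Tᶜ v with hwdef
  have hfback : ∀ i ∉ T, ∀ j, feedback Φ T Xt i j = 0 := by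
    intro i hi j
    simp [feedback, hi]
  have hw : w = rowRestrict Tᶜ X := by
    ext i j
    by_cases h : i ∈ T
    · simp [hwdef, rowRestrict, Finset.mem_compl, h]
    · simp [hwdef, rowRestrict, Finset.mem_compl, h, hvdef, Matrix.sub_apply, hfback i h j]
  have hv : v = u + w := by
    ext i j
    by_cases h : i ∈ T <;>
      simp [hudef, hwdef, rowRestrict, Matrix.add_apply, Finset.mem_compl, h]
  have hSuppU : SuppIn u T := by
    intro i hi j
    simp [hudef, rowRestrict, hi]
  have hSuppW : SuppIn w Tᶜ := by
    intro i hi j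
    simp only [Finset.mem_compl, not_not] at hi
    simp [hwdef, rowRestrict, hi]
  set S : Finset (Fin N) := T ∪ rowSupp X with hSdef
  have hcardS : S.card ≤ s + t := by
    calc S.card ≤ T.card + (rowSupp X).card := Finset.card_union_le _ _
      _ ≤ t + s := by omega
      _ = s + t := by omega
  have hSuppU' : SuppIn u S := fun i hi j =>
    hSuppU i (fun h => hi (Finset.mem_union_left _ h)) j
  have hSuppV : SuppIn v S := by
    intro i hi j
    have hiT : i ∉ T := fun h => hi (Finset.mem_union_left _ h)
    have hiX : i ∉ rowSupp X := fun h => hi (Finset.mem_union_right _ h)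
    have hX0 : X i j = 0 := by
      rw [rowSupp, Finset.mem_filter] at hiX
      push_neg at hiX
      have := hiX (Finset.mem_univ i)
      exact congrFun this j
    simp [hvdef, Matrix.sub_apply, hX0, hfback i hiT j]
  -- orthogonality of u and w
  have hortho : ip u w = 0 := ip_disjoint hSuppU hSuppW
  set V := frobNorm v with hVdef
  set U := frobNorm u with hUdef
  set W0 := frobNorm w with hW0def
  have hV0 : 0 ≤ V := frobNorm_nonneg v
  have hU0 : 0 ≤ U := frobNorm_nonneg u
  have hW00 : 0 ≤ W0 := frobNorm_nonneg w
  have hE0 : 0 ≤ frobNorm E := frobNorm_nonneg E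
  have hV2 : V ^ 2 = U ^ 2 + W0 ^ 2 := by
    rw [hVdef, frob_sq, hv, ip_add_left, ip_add_right, ip_add_right, hortho, ip_comm w u, hortho,
      ← frob_sq, ← frob_sq]
    ring
  have hU2 : ip u v = U ^ 2 := by
    rw [hv, ip_add_right, hortho, ← frob_sq]
    ring
  -- normal equations
  have hnorm := normal_eq Φ X E Y hY Xt hfeas T hinv
  have hip0 : ip (Φ * u) (Φ * v) + ip (Φ * u) E = 0 := by
    have hz : (inner ℂ (emb (Φ * u)) (emb (Φ * v + E)) : ℂ) = 0 := by
      rw [adjoint_emb, inner_emb]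
      refine Finset.sum_eq_zero fun i _ => Finset.sum_eq_zero fun j _ => ?_
      by_cases hiT : i ∈ T
      · have hentry : (Φᴴ * (Φ * v + E)) i j
            = ((colSub Φ T)ᴴ * (Φ * (X - feedback Φ T Xt) + E)) ⟨i, hiT⟩ j := by
          rw [Matrix.mul_apply, Matrix.mul_apply]
          exact Finset.sum_congr rfl fun m _ => rfl
        rw [hentry, hnorm]
        simp
      · rw [hSuppU i hiT j]
        simp
    have : ip u (Φᴴ * (Φ * v + E)) = 0 := by
      rw [ip, ← adjoint_emb, hz, Complex.zero_re]
    have h2 : ip (Φ * u) (Φ * v + E) = 0 := by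
      rw [ip, adjoint_emb, ← this, ip]
    rw [← h2, ip_add_right]
  -- bound on ip (Φ u) (Φ v)
  have hPhiu : frobNorm (Φ * u) ≤ Real.sqrt (1 + δt) * U := by
    have hcardu : (rowSupp u).card ≤ t := by
      calc (rowSupp u).card ≤ T.card := Finset.card_le_card (card_rowSupp_le hSuppU)
        _ = t := hTcard
    have := (hRICt u hcardu).2
    have h1 : frobNorm (Φ * u) = Real.sqrt (frobNorm (Φ * u) ^ 2) :=
      (Real.sqrt_sq (frobNorm_nonneg _)).symm
    rw [h1]
    calc Real.sqrt (frobNorm (Φ * u) ^ 2) ≤ Real.sqrt ((1 + δt) * U ^ 2) :=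
          Real.sqrt_le_sqrt this
      _ = Real.sqrt (1 + δt) * U := by
          rw [Real.sqrt_mul (by linarith), Real.sqrt_sq hU0]
  have hipPhi : ip (Φ * u) (Φ * v) ≤ Real.sqrt (1 + δt) * U * frobNorm E := by
    have h1 : -(frobNorm (Φ * u) * frobNorm E) ≤ ip (Φ * u) E := ip_CS' _ _
    have h2 : ip (Φ * u) (Φ * v) = -ip (Φ * u) E := by linarith
    have h3 : frobNorm (Φ * u) * frobNorm E ≤ Real.sqrt (1 + δt) * U * frobNorm E :=
      mul_le_mul_of_nonneg_right hPhiu hE0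
    linarith
  -- bilinear RIC bound
  have hbil : ip u v - ip (Φ * u) (Φ * v) ≤ δst * (U * V) :=
    bilinear_RIC hδst0 hRICst hcardS hSuppU' hSuppV
  -- combine : U^2 ≤ δst U V + sqrt(1+δt) U ‖E‖
  have hUbound : U ≤ δst * V + Real.sqrt (1 + δt) * frobNorm E := by
    have hkey : U ^ 2 ≤ δst * (U * V) + Real.sqrt (1 + δt) * U * frobNorm E := by
      rw [← hU2]; linarith
    rcases eq_or_lt_of_le hU0 with h0 | h0
    · rw [← h0]
      have : 0 ≤ Real.sqrt (1 + δt) * frobNorm E :=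
        mul_nonneg (Real.sqrt_nonneg _) hE0
      nlinarith [mul_nonneg hδst0 hV0]
    · nlinarith [hkey]
  have hCnn : 0 ≤ Real.sqrt (1 + δt) * frobNorm E := mul_nonneg (Real.sqrt_nonneg _) hE0
  have hfin : V ^ 2 ≤ (δst * V + Real.sqrt (1 + δt) * frobNorm E) ^ 2 + W0 ^ 2 := by
    have : U ^ 2 ≤ (δst * V + Real.sqrt (1 + δt) * frobNorm E) ^ 2 := by
      nlinarith [mul_nonneg hδst0 hV0]
    linarith [hV2]
  have := final_alg δst (Real.sqrt (1 + δt) * frobNorm E) W0 V hδst0 hδst1 hCnn hW00 hV0 hfin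
  rw [hW0def, hw] at this
  exact this
end

section
/- (Theorem 1.) Let Y = ΦX + E, where Φ ∈ ℂ^{M×N} has ΦΦ* invertible, X ∈ ℂ^{N×L} is s row-sparse, and E ∈ ℂ^{M×L}. Let f: ℕ → ℕ be non-decreasing with f(j) ≥ s for all j ≥ 1, and set f(0) = 0. Fix k ≥ 1, and suppose δ < 1 is a restricted isometry constant of order s + f(k) + f(k−1) for Φ, γ is a preconditioned restricted isometry constant of order s + f(k) + f(k−1) for Φ, θ is an upper restricted isometry constant of order s + f(k) for (ΦΦ*)⁻¹Φ, and α ≥ 1. Let W⁰ = 0 and for each j = 1,…,k suppose: X^j = W^{j−1} + Φ*(ΦΦ*)⁻¹(Y − ΦW^{j−1}); X^j = Q^j R^j with Q^j ∈ ℂ^{N×L} having orthonormal columns and R^j ∈ ℂ^{L×L} invertible with σ_max(R^j) ≤ α·σ_min(R^j); T_j ⊆ {1,…,N} has |T_j| = f(j) and ‖Q^j_{i·}‖₂ ≥ ‖Q^j_{m·}‖₂ for all i ∈ T_j, m ∉ T_j; Φ_{T_j}*Φ_{T_j} is invertible; and W^j is the feedback W^j_(T_j^c) = 0, W^j_{(T_j)}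 = X^j_{(T_j)} + (Φ_{T_j}*Φ_{T_j})⁻¹Φ_{T_j}*Φ_{T_j^c}X^j_{(T_j^c)}. Then, with ρ = √(2α²γ²/(1 − δ²)) and κ = √(1+δ)/(1−δ) + √(2α²(1+θ))/√(1−δ²), it holds that ‖X − W^k‖_F ≤ ρ^k·‖X − W⁰‖_F + κ·(∑_{j=0}^{k−1} ρ^j)·‖E‖_F. -/
open Matrix BigOperators

namespace S13

/-- Embedding of a matrix into Euclidean space. -/
def emb {m n : Type*} [Fintype m] [Fintype n] (A : Matrix m n ℂ) :
    EuclideanSpace ℂ (m × n) := WithLp.toLp 2 (fun p : m × n => A p.1 p.2)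

/-- Matrix inner product. -/
noncomputable def mip {m n : Type*} [Fintype m] [Fintype n] (A B : Matrix m n ℂ) : ℂ :=
  Matrix.trace (Aᴴ * B)

variable {m n p : Type*} [Fintype m] [Fintype n] [Fintype p]

lemma emb_add (A B : Matrix m n ℂ) : emb (A + B) = emb A + emb B := rfl
lemma emb_sub (A B : Matrix m n ℂ) : emb (A - B) = emb A - emb B := rfl
lemma emb_smul (c : ℂ) (A : Matrix m n ℂ) : emb (c • A) = c • emb A := rfl
lemma emb_zero : emb (0 : Matrix m n ℂ) = 0 := rfl

lemma emb_eq_zero {A : Matrix m n ℂ} (h : emb A = 0) : A = 0 := by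
  ext i j; exact congrFun (congrArg WithLp.ofLp h) (i, j)

lemma frobNorm_emb (A : Matrix m n ℂ) : frobNorm A = ‖emb A‖ := by
  rw [frobNorm, EuclideanSpace.norm_eq, Fintype.sum_prod_type]
  rfl

lemma mip_eq_sum (A B : Matrix m n ℂ) :
    mip A B = ∑ i, ∑ j, (starRingEnd ℂ) (A i j) * B i j := by
  rw [mip, Matrix.trace]
  simp only [Matrix.diag, Matrix.mul_apply, Matrix.conjTranspose_apply]
  rw [Finset.sum_comm]
  rfl

lemma mip_emb (A B : Matrix m n ℂ) : mip A B = (inner ℂ (emb A) (emb B) : ℂ) := by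
  rw [mip_eq_sum, PiLp.inner_apply, Fintype.sum_prod_type]
  simp [RCLike.inner_apply, emb, mul_comm]

lemma mip_self_re (A : Matrix m n ℂ) : (mip A A).re = frobNorm A ^ 2 := by
  rw [mip_emb, frobNorm_emb]
  have := @inner_self_eq_norm_sq ℂ _ _ _ _ (emb A); simpa using this

lemma frobNorm_nonneg (A : Matrix m n ℂ) : 0 ≤ frobNorm A := Real.sqrt_nonneg _

lemma re_mip_le (A B : Matrix m n ℂ) : (mip A B).re ≤ frobNorm A * frobNorm B := by
  rw [mip_emb, frobNorm_emb, frobNorm_emb]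
  have := re_inner_le_norm (𝕜 := ℂ) (emb A) (emb B); simpa using this

lemma frobNorm_add_le (A B : Matrix m n ℂ) : frobNorm (A + B) ≤ frobNorm A + frobNorm B := by
  rw [frobNorm_emb, frobNorm_emb, frobNorm_emb, emb_add]; exact norm_add_le _ _

lemma frobNorm_neg (A : Matrix m n ℂ) : frobNorm (-A) = frobNorm A := by
  have : -A = (-1 : ℂ) • A := by ext i j; simp
  rw [this, frobNorm_emb, emb_smul, norm_smul, frobNorm_emb]; simp

lemma frobNorm_eq_zero {A : Matrix m n ℂ} (h : frobNorm A = 0) : A = 0 := by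
  rw [frobNorm_emb] at h
  exact emb_eq_zero (norm_eq_zero.mp h)

lemma frob_add_sq (A B : Matrix m n ℂ) :
    frobNorm (A + B) ^ 2 = frobNorm A ^ 2 + 2 * (mip A B).re + frobNorm B ^ 2 := by
  rw [frobNorm_emb, frobNorm_emb, frobNorm_emb, emb_add, mip_emb]
  have := @norm_add_sq ℂ _ _ _ _ (emb A) (emb B); simpa using this

lemma frob_sub_sq (A B : Matrix m n ℂ) :
    frobNorm (A - B) ^ 2 = frobNorm A ^ 2 - 2 * (mip A B).re + frobNorm B ^ 2 := by
  rw [frobNorm_emb, frobNorm_emb, frobNorm_emb, emb_sub, mip_emb]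
  have := @norm_sub_sq ℂ _ _ _ _ (emb A) (emb B); simpa using this

lemma mip_add_right (A B C : Matrix m n ℂ) : mip A (B + C) = mip A B + mip A C := by
  simp [mip, Matrix.mul_add]

lemma mip_sub_right (A B C : Matrix m n ℂ) : mip A (B - C) = mip A B - mip A C := by
  simp [mip, Matrix.mul_sub]

lemma mip_neg_right (A B : Matrix m n ℂ) : mip A (-B) = - mip A B := by
  simp [mip]

lemma mip_zero_right (A B : Matrix m n ℂ) : mip A 0 = 0 := by simp [mip]

lemma mip_smul (c : ℂ) (A B : Matrix m n ℂ) :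
    mip (c • A) B = (starRingEnd ℂ) c * mip A B ∧ mip A (c • B) = c * mip A B := by
  constructor
  · rw [mip_emb, mip_emb, emb_smul, inner_smul_left]
  · rw [mip_emb, mip_emb, emb_smul, inner_smul_right]

/-- move a matrix across the inner product -/
lemma mip_mul_left (Mc : Matrix p m ℂ) (A : Matrix m n ℂ) (B : Matrix p n ℂ) :
    mip (Mc * A) B = mip A (Mcᴴ * B) := by
  rw [mip, mip, Matrix.conjTranspose_mul, Matrix.mul_assoc]


variable {N L : ℕ}

lemma rowSupp_apply {X : Matrix (Fin N) (Fin L) ℂ} {i : Fin N} (h : i ∉ rowSupp X) :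
    X i = 0 := by
  classical
  by_contra hne
  exact h (by simp [rowSupp, hne])

lemma mem_rowSupp {X : Matrix (Fin N) (Fin L) ℂ} {i : Fin N} (h : X i ≠ 0) :
    i ∈ rowSupp X := by
  classical
  simp [rowSupp, h]

lemma rowSupp_add_subset (A B : Matrix (Fin N) (Fin L) ℂ) :
    rowSupp (A + B) ⊆ rowSupp A ∪ rowSupp B := by
  classical
  intro i hi
  by_contra h
  simp only [Finset.mem_union, not_or] at h
  have hA := rowSupp_apply h.1
  have hB := rowSupp_apply h.2
  have : (A + B) i ≠ 0 := by simpa [rowSupp] using hi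
  exact this (by funext j; simp [Matrix.add_apply, congrFun hA j, congrFun hB j])

lemma rowSupp_sub_subset (A B : Matrix (Fin N) (Fin L) ℂ) :
    rowSupp (A - B) ⊆ rowSupp A ∪ rowSupp B := by
  classical
  intro i hi
  by_contra h
  simp only [Finset.mem_union, not_or] at h
  have hA := rowSupp_apply h.1
  have hB := rowSupp_apply h.2
  have : (A - B) i ≠ 0 := by simpa [rowSupp] using hi
  exact this (by funext j; simp [Matrix.sub_apply, congrFun hA j, congrFun hB j])

lemma rowSupp_smul_subset (c : ℂ) (A : Matrix (Fin N) (Fin L) ℂ) :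
    rowSupp (c • A) ⊆ rowSupp A := by
  classical
  intro i hi
  by_contra h
  have hA := rowSupp_apply h
  have : (c • A) i ≠ 0 := by simpa [rowSupp] using hi
  exact this (by funext j; simp [Matrix.smul_apply, congrFun hA j])

lemma rowSupp_rowRestrict_subset (T : Finset (Fin N)) (A : Matrix (Fin N) (Fin L) ℂ) :
    rowSupp (rowRestrict T A) ⊆ T := by
  classical
  intro i hi
  by_contra h
  have : rowRestrict T A i ≠ 0 := by simpa [rowSupp] using hi
  exact this (by funext j; simp [rowRestrict, h])

lemma rowRestrict_eq_self {T : Finset (Fin N)} {A : Matrix (Fin N) (Fin L) ℂ}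
    (h : rowSupp A ⊆ T) : rowRestrict T A = A := by
  ext i j
  by_cases hi : i ∈ T
  · simp [rowRestrict, hi]
  · have : i ∉ rowSupp A := fun hc => hi (h hc)
    simp [rowRestrict, hi, congrFun (rowSupp_apply this) j]

lemma rowRestrict_add (T : Finset (Fin N)) (A B : Matrix (Fin N) (Fin L) ℂ) :
    rowRestrict T (A + B) = rowRestrict T A + rowRestrict T B := by
  ext i j
  by_cases hi : i ∈ T <;> simp [rowRestrict, hi]

lemma rowRestrict_sub (T : Finset (Fin N)) (A B : Matrix (Fin N) (Fin L) ℂ) :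
    rowRestrict T (A - B) = rowRestrict T A - rowRestrict T B := by
  ext i j
  by_cases hi : i ∈ T <;> simp [rowRestrict, hi]

lemma mip_rowRestrict (T : Finset (Fin N)) (A B : Matrix (Fin N) (Fin L) ℂ) :
    mip (rowRestrict T A) B = mip (rowRestrict T A) (rowRestrict T B) := by
  rw [mip_eq_sum, mip_eq_sum]
  refine Finset.sum_congr rfl fun i _ => Finset.sum_congr rfl fun j _ => ?_
  by_cases hi : i ∈ T <;> simp [rowRestrict, hi]

/-- Frobenius norm squared as a sum of row norms squared. -/
lemma frob_sq_rows (A : Matrix (Fin N) (Fin L) ℂ) :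
    frobNorm A ^ 2 = ∑ i, vecNorm (A i) ^ 2 := by
  rw [← mip_self_re, mip_eq_sum]
  have : ∀ i : Fin N, vecNorm (A i) ^ 2 = ∑ j, ‖A i j‖ ^ 2 := by
    intro i
    rw [vecNorm, Real.sq_sqrt]
    positivity
  rw [Complex.re_sum]
  refine Finset.sum_congr rfl fun i _ => ?_
  rw [this i, Complex.re_sum]
  refine Finset.sum_congr rfl fun j _ => ?_
  rw [mul_comm, Complex.mul_conj']
  rw [← Complex.ofReal_pow, Complex.ofReal_re]

lemma frob_sq_rowRestrict (T : Finset (Fin N)) (A : Matrix (Fin N) (Fin L) ℂ) :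
    frobNorm (rowRestrict T A) ^ 2 = ∑ i ∈ T, vecNorm (A i) ^ 2 := by
  rw [frob_sq_rows]
  classical
  rw [← Finset.sum_filter_add_sum_filter_not Finset.univ (fun i => i ∈ T)]
  have h1 : ∀ i ∈ Finset.univ.filter (fun i => i ∈ T),
      vecNorm (rowRestrict T A i) ^ 2 = vecNorm (A i) ^ 2 := by
    intro i hi
    simp only [Finset.mem_filter] at hi
    have : rowRestrict T A i = A i := by funext j; simp [rowRestrict, hi.2]
    rw [this]
  have h2 : ∀ i ∈ Finset.univ.filter (fun i => ¬ i ∈ T),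
      vecNorm (rowRestrict T A i) ^ 2 = 0 := by
    intro i hi
    simp only [Finset.mem_filter] at hi
    have : rowRestrict T A i = fun _ => 0 := by funext j; simp [rowRestrict, hi.2]
    rw [this]
    simp [vecNorm]
  rw [Finset.sum_congr rfl h1, Finset.sum_congr rfl h2]
  simp [Finset.filter_mem_eq_inter]

section Vec
variable {ι : Type*} [Fintype ι]

/-- Embedding of a vector into Euclidean space. -/
def vemb (v : ι → ℂ) : EuclideanSpace ℂ ι := WithLp.toLp 2 v

lemma vemb_smul (c : ℂ) (v : ι → ℂ) : vemb (c • v) = c • vemb v := rfl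

lemma vecNorm_emb (v : ι → ℂ) : vecNorm v = ‖vemb v‖ := by
  rw [vecNorm, EuclideanSpace.norm_eq]; rfl

lemma vecNorm_nonneg (v : ι → ℂ) : 0 ≤ vecNorm v := Real.sqrt_nonneg _

lemma vecNorm_zero : vecNorm (0 : ι → ℂ) = 0 := by simp [vecNorm]

lemma vecNorm_eq_zero {v : ι → ℂ} (h : vecNorm v = 0) : v = 0 := by
  rw [vecNorm_emb] at h
  have h2 : vemb v = 0 := norm_eq_zero.mp h
  funext i
  exact congrFun (congrArg WithLp.ofLp h2) i

lemma vecNorm_smul (c : ℂ) (v : ι → ℂ) : vecNorm (c • v) = ‖c‖ * vecNorm v := by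
  rw [vecNorm_emb, vecNorm_emb, vemb_smul, norm_smul]

lemma vecNorm_star (v : ι → ℂ) : vecNorm (star v) = vecNorm v := by
  simp [vecNorm, Pi.star_apply]

lemma vecNorm_neg (v : ι → ℂ) : vecNorm (-v) = vecNorm v := by
  simp [vecNorm]

end Vec

section Sigma
variable {L : ℕ}

lemma sigmaSet_nonneg {R : Matrix (Fin L) (Fin L) ℂ} {c : ℝ} (h : c ∈ sigmaSet R) : 0 ≤ c := by
  obtain ⟨v, _, rfl⟩ := h
  exact vecNorm_nonneg _

lemma sigmaSet_bddBelow (R : Matrix (Fin L) (Fin L) ℂ) : BddBelow (sigmaSet R) :=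
  ⟨0, fun _ h => sigmaSet_nonneg h⟩

/-- Crude bound on mulVec by the Frobenius norm. -/
lemma mulVec_le_frob (R : Matrix (Fin L) (Fin L) ℂ) (v : Fin L → ℂ) :
    vecNorm (R.mulVec v) ≤ frobNorm R * vecNorm v := by
  have hrow : ∀ j, ‖R.mulVec v j‖ ≤ vecNorm (R j) * vecNorm v := by
    intro j
    have : R.mulVec v j = (inner ℂ (vemb (star (R j))) (vemb v) : ℂ) := by
      rw [PiLp.inner_apply]
      simp [Matrix.mulVec, dotProduct, vemb, RCLike.inner_apply, mul_comm]
    rw [this]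
    calc ‖(inner ℂ (vemb (star (R j))) (vemb v) : ℂ)‖ ≤ ‖vemb (star (R j))‖ * ‖vemb v‖ :=
          norm_inner_le_norm _ _
      _ = vecNorm (R j) * vecNorm v := by rw [← vecNorm_emb, ← vecNorm_emb, vecNorm_star]
  have h1 : vecNorm (R.mulVec v) ^ 2 ≤ (frobNorm R * vecNorm v) ^ 2 := by
    have e1 : vecNorm (R.mulVec v) ^ 2 = ∑ j, ‖R.mulVec v j‖ ^ 2 := by
      rw [vecNorm, Real.sq_sqrt]; positivity
    have e2 : (frobNorm R * vecNorm v) ^ 2 = (∑ j, vecNorm (R j) ^ 2) * vecNorm v ^ 2 := by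
      rw [mul_pow, ← frob_sq_rows]
    rw [e1, e2, Finset.sum_mul]
    refine Finset.sum_le_sum fun j _ => ?_
    have := hrow j
    have h0 : (0:ℝ) ≤ ‖R.mulVec v j‖ := norm_nonneg _
    calc ‖R.mulVec v j‖ ^ 2 ≤ (vecNorm (R j) * vecNorm v) ^ 2 := by
          apply pow_le_pow_left₀ h0 this
      _ = vecNorm (R j) ^ 2 * vecNorm v ^ 2 := by ring
  have h2 : 0 ≤ frobNorm R * vecNorm v := mul_nonneg (frobNorm_nonneg R) (vecNorm_nonneg v)
  nlinarith [vecNorm_nonneg (R.mulVec v)]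

lemma sigmaSet_bddAbove (R : Matrix (Fin L) (Fin L) ℂ) : BddAbove (sigmaSet R) := by
  refine ⟨frobNorm R, fun c hc => ?_⟩
  obtain ⟨v, hv, rfl⟩ := hc
  have := mulVec_le_frob R v
  rw [hv, mul_one] at this
  exact this

lemma sigmaMax_nonneg (R : Matrix (Fin L) (Fin L) ℂ) : 0 ≤ sigmaMax R := by
  rcases Set.eq_empty_or_nonempty (sigmaSet R) with h | h
  · rw [sigmaMax, h, Real.sSup_empty]
  · obtain ⟨c, hc⟩ := h
    exact le_trans (sigmaSet_nonneg hc) (le_csSup (sigmaSet_bddAbove R) hc)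

lemma sigmaMin_nonneg (R : Matrix (Fin L) (Fin L) ℂ) : 0 ≤ sigmaMin R := by
  rcases Set.eq_empty_or_nonempty (sigmaSet R) with h | h
  · rw [sigmaMin, h, Real.sInf_empty]
  · exact le_csInf h fun c hc => sigmaSet_nonneg hc

/-- Upper singular-value bound for mulVec. -/
lemma mulVec_le_sigmaMax (R : Matrix (Fin L) (Fin L) ℂ) (v : Fin L → ℂ) :
    vecNorm (R.mulVec v) ≤ sigmaMax R * vecNorm v := by
  by_cases hv : vecNorm v = 0
  · rw [hv, mul_zero, vecNorm_eq_zero hv,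
      show Matrix.mulVec R 0 = 0 from Matrix.mulVec_zero R, vecNorm_zero]
  · have hv0 : 0 < vecNorm v := lt_of_le_of_ne (vecNorm_nonneg v) (Ne.symm hv)
    set c : ℂ := (((vecNorm v)⁻¹ : ℝ) : ℂ) with hc
    have hcc : ‖c‖ = (vecNorm v)⁻¹ := by
      rw [hc, Complex.norm_real, Real.norm_eq_abs,
        abs_of_nonneg (le_of_lt (inv_pos.mpr hv0))]
    have hu : vecNorm (c • v) = 1 := by
      rw [vecNorm_smul, hcc]
      field_simp
    have hmem : vecNorm (R.mulVec (c • v)) ∈ sigmaSet R := ⟨c • v, hu, rfl⟩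
    have hle := le_csSup (sigmaSet_bddAbove R) hmem
    rw [Matrix.mulVec_smul, vecNorm_smul, hcc] at hle
    calc vecNorm (R.mulVec v) = vecNorm v * ((vecNorm v)⁻¹ * vecNorm (R.mulVec v)) := by
          field_simp
      _ ≤ vecNorm v * sigmaMax R := by
          apply mul_le_mul_of_nonneg_left hle (le_of_lt hv0)
      _ = sigmaMax R * vecNorm v := by ring

/-- Lower singular-value bound for mulVec. -/
lemma sigmaMin_le_mulVec (R : Matrix (Fin L) (Fin L) ℂ) (v : Fin L → ℂ) :
    sigmaMin R * vecNorm v ≤ vecNorm (R.mulVec v) := by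
  by_cases hv : vecNorm v = 0
  · rw [hv, mul_zero]
    exact vecNorm_nonneg _
  · have hv0 : 0 < vecNorm v := lt_of_le_of_ne (vecNorm_nonneg v) (Ne.symm hv)
    set c : ℂ := (((vecNorm v)⁻¹ : ℝ) : ℂ) with hc
    have hcc : ‖c‖ = (vecNorm v)⁻¹ := by
      rw [hc, Complex.norm_real, Real.norm_eq_abs,
        abs_of_nonneg (le_of_lt (inv_pos.mpr hv0))]
    have hu : vecNorm (c • v) = 1 := by
      rw [vecNorm_smul, hcc]
      field_simp
    have hmem : vecNorm (R.mulVec (c • v)) ∈ sigmaSet R := ⟨c • v, hu, rfl⟩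
    have hle := csInf_le (sigmaSet_bddBelow R) hmem
    rw [Matrix.mulVec_smul, vecNorm_smul, hcc] at hle
    calc sigmaMin R * vecNorm v ≤ ((vecNorm v)⁻¹ * vecNorm (R.mulVec v)) * vecNorm v := by
          apply mul_le_mul_of_nonneg_right hle (le_of_lt hv0)
      _ = vecNorm (R.mulVec v) := by field_simp

end Sigma

section Sigma2
variable {L : ℕ}

lemma unit_exists (hL : 0 < L) : ∃ v : Fin L → ℂ, vecNorm v = 1 := by
  refine ⟨Pi.single ⟨0, hL⟩ 1, ?_⟩
  rw [vecNorm_emb]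
  have h1 : vemb (Pi.single (⟨0, hL⟩ : Fin L) (1:ℂ)) = EuclideanSpace.single ⟨0, hL⟩ 1 := rfl
  rw [h1, EuclideanSpace.norm_single]
  simp

lemma sigmaMin_pos {R : Matrix (Fin L) (Fin L) ℂ} {α : ℝ} (hL : 0 < L) (hR : IsUnit R)
    (hα : 0 ≤ α) (hcond : sigmaMax R ≤ α * sigmaMin R) : 0 < sigmaMin R := by
  rcases lt_or_eq_of_le (sigmaMin_nonneg R) with h | h
  · exact h
  exfalso
  have hmax : sigmaMax R ≤ 0 := by
    rw [← h] at hcond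
    simpa using hcond
  -- every unit vector is killed
  have hkill : ∀ v : Fin L → ℂ, R.mulVec v = 0 := by
    intro v
    by_cases hv : vecNorm v = 0
    · rw [vecNorm_eq_zero hv, Matrix.mulVec_zero]
    · have h1 := mulVec_le_sigmaMax R v
      have h2 : sigmaMax R * vecNorm v ≤ 0 :=
        mul_nonpos_of_nonpos_of_nonneg hmax (vecNorm_nonneg v)
      have : vecNorm (R.mulVec v) = 0 :=
        le_antisymm (le_trans h1 h2) (vecNorm_nonneg _)
      exact vecNorm_eq_zero this
  have hR0 : R = 0 := by
    ext a b
    have := congrFun (hkill (Pi.single b 1)) a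
    rw [Matrix.mulVec_single] at this
    simpa using this
  obtain ⟨u, hu⟩ := hR
  have h1 : (u * u⁻¹ : Matrix (Fin L) (Fin L) ℂ) = 1 := by
    exact_mod_cast u.mul_inv
  rw [hu] at h1
  rw [hR0] at h1
  have := congrFun (congrFun h1 ⟨0, hL⟩) ⟨0, hL⟩
  simp [Matrix.one_apply] at this

lemma sigmaMax_inv_le {R : Matrix (Fin L) (Fin L) ℂ} (hR : IsUnit R)
    (hmin : 0 < sigmaMin R) : sigmaMax R⁻¹ ≤ 1 / sigmaMin R := by
  have hdet : IsUnit R.det := (Matrix.isUnit_iff_isUnit_det R).mp hR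
  rcases Set.eq_empty_or_nonempty (sigmaSet R⁻¹) with h | h
  · rw [sigmaMax, h, Real.sSup_empty]
    positivity
  · rw [sigmaMax]
    apply csSup_le h
    rintro c ⟨v, hv, rfl⟩
    have key : sigmaMin R * vecNorm (R⁻¹.mulVec v) ≤ 1 := by
      have := sigmaMin_le_mulVec R (R⁻¹.mulVec v)
      rw [Matrix.mulVec_mulVec, Matrix.mul_nonsing_inv R hdet] at this
      simpa [Matrix.one_mulVec, hv] using this
    rw [le_div_iff₀ hmin]
    linarith [key]

/-- Adjoint inner product identity for mulVec. -/
lemma inner_conjTranspose_mulVec (A : Matrix (Fin L) (Fin L) ℂ) (x y : Fin L → ℂ) :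
    (inner ℂ (vemb (Aᴴ.mulVec x)) (vemb y) : ℂ) = (inner ℂ (vemb x) (vemb (A.mulVec y)) : ℂ) := by
  rw [PiLp.inner_apply, PiLp.inner_apply]
  simp only [RCLike.inner_apply, vemb, Matrix.mulVec, dotProduct,
    Matrix.conjTranspose_apply, map_sum, Finset.mul_sum, Finset.sum_mul]
  rw [Finset.sum_comm]
  refine Finset.sum_congr rfl fun l _ => Finset.sum_congr rfl fun a _ => ?_
  simp only [_root_.map_mul, Complex.star_def, Complex.conj_conj]
  ring

/-- mulVec by conjugate transpose is bounded by sigmaMax. -/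
lemma conjTranspose_mulVec_le (A : Matrix (Fin L) (Fin L) ℂ) (u : Fin L → ℂ) :
    vecNorm (Aᴴ.mulVec u) ≤ sigmaMax A * vecNorm u := by
  set w := Aᴴ.mulVec u with hw
  by_cases hw0 : vecNorm w = 0
  · exact le_trans (le_of_eq hw0) (mul_nonneg (sigmaMax_nonneg A) (vecNorm_nonneg u))
  · have hw1 : 0 < vecNorm w := lt_of_le_of_ne (vecNorm_nonneg w) (Ne.symm hw0)
    have h1 : vecNorm w ^ 2 = ((inner ℂ (vemb u) (vemb (A.mulVec w)) : ℂ)).re := by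
      rw [← inner_conjTranspose_mulVec A u w, ← hw]
      have := @inner_self_eq_norm_sq ℂ _ _ _ _ (vemb w)
      rw [vecNorm_emb]
      simpa using this.symm
    have h2 : ((inner ℂ (vemb u) (vemb (A.mulVec w)) : ℂ)).re ≤ vecNorm u * vecNorm (A.mulVec w) := by
      rw [vecNorm_emb, vecNorm_emb]
      have := re_inner_le_norm (𝕜 := ℂ) (vemb u) (vemb (A.mulVec w))
      simpa using this
    have h3 : vecNorm (A.mulVec w) ≤ sigmaMax A * vecNorm w := mulVec_le_sigmaMax A w
    have h4 : vecNorm w ^ 2 ≤ vecNorm u * (sigmaMax A * vecNorm w) := by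
      calc vecNorm w ^ 2 ≤ vecNorm u * vecNorm (A.mulVec w) := h1 ▸ h2
        _ ≤ vecNorm u * (sigmaMax A * vecNorm w) :=
            mul_le_mul_of_nonneg_left h3 (vecNorm_nonneg u)
    nlinarith [vecNorm_nonneg u, sigmaMax_nonneg A]

/-- Transpose mulVec via conjugation. -/
lemma transpose_mulVec_eq (A : Matrix (Fin L) (Fin L) ℂ) (u : Fin L → ℂ) :
    vecNorm (Aᵀ.mulVec u) = vecNorm (Aᴴ.mulVec (star u)) := by
  have : Aᴴ.mulVec (star u) = star (Aᵀ.mulVec u) := by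
    funext j
    show (Aᴴ.mulVec (star u)) j = star ((Aᵀ.mulVec u) j)
    simp only [Matrix.mulVec, dotProduct, Matrix.conjTranspose_apply,
      Matrix.transpose_apply, Pi.star_apply, star_sum, star_mul', Complex.star_def]
  rw [this, vecNorm_star]

lemma transpose_mulVec_le (A : Matrix (Fin L) (Fin L) ℂ) (u : Fin L → ℂ) :
    vecNorm (Aᵀ.mulVec u) ≤ sigmaMax A * vecNorm u := by
  rw [transpose_mulVec_eq]
  calc vecNorm (Aᴴ.mulVec (star u)) ≤ sigmaMax A * vecNorm (star u) :=
        conjTranspose_mulVec_le A (star u)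
    _ = sigmaMax A * vecNorm u := by rw [vecNorm_star]

end Sigma2

section Polar
variable {M N L : ℕ}

lemma mip_zero_left {m n : Type*} [Fintype m] [Fintype n] (B : Matrix m n ℂ) :
    mip 0 B = 0 := by simp [mip]

lemma mip_real_smul_left (r : ℝ) (A B : Matrix (Fin N) (Fin L) ℂ) :
    mip ((r:ℂ) • A) B = (r:ℂ) * mip A B := by
  rw [mip_emb, mip_emb, emb_smul, inner_smul_left]
  simp [Complex.conj_ofReal]

lemma mip_real_smul_right (r : ℝ) (A B : Matrix (Fin N) (Fin L) ℂ) :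
    mip A ((r:ℂ) • B) = (r:ℂ) * mip A B := by
  rw [mip_emb, mip_emb, emb_smul, inner_smul_right]

lemma frobNorm_real_smul (r : ℝ) (hr : 0 ≤ r) (A : Matrix (Fin N) (Fin L) ℂ) :
    frobNorm ((r:ℂ) • A) = r * frobNorm A := by
  rw [frobNorm_emb, frobNorm_emb, emb_smul, norm_smul, Complex.norm_real, Real.norm_eq_abs,
    abs_of_nonneg hr]

lemma polar_base {Φ : Matrix (Fin M) (Fin N) ℂ} {t : ℕ} {δ : ℝ}
    (hRIC : IsRIC L Φ t δ) (Z₁ Z₂ : Matrix (Fin N) (Fin L) ℂ)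
    (h : (rowSupp Z₁ ∪ rowSupp Z₂).card ≤ t) :
    (mip Z₁ Z₂).re - (mip (Φ * Z₁) (Φ * Z₂)).re ≤
      δ * (frobNorm Z₁ ^ 2 + frobNorm Z₂ ^ 2) / 2 := by
  have hadd : (rowSupp (Z₁ + Z₂)).card ≤ t :=
    le_trans (Finset.card_le_card (rowSupp_add_subset Z₁ Z₂)) h
  have hsub : (rowSupp (Z₁ - Z₂)).card ≤ t :=
    le_trans (Finset.card_le_card (rowSupp_sub_subset Z₁ Z₂)) h
  have h1 := (hRIC (Z₁ + Z₂) hadd).1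
  have h2 := (hRIC (Z₁ - Z₂) hsub).2
  rw [Matrix.mul_add] at h1
  rw [Matrix.mul_sub] at h2
  rw [frob_add_sq, frob_add_sq] at h1
  rw [frob_sub_sq, frob_sub_sq] at h2
  nlinarith [h1, h2]

lemma polar {Φ : Matrix (Fin M) (Fin N) ℂ} {t : ℕ} {δ : ℝ} (hδ : 0 ≤ δ)
    (hRIC : IsRIC L Φ t δ) (Z₁ Z₂ : Matrix (Fin N) (Fin L) ℂ)
    (h : (rowSupp Z₁ ∪ rowSupp Z₂).card ≤ t) :
    (mip Z₁ Z₂).re - (mip (Φ * Z₁) (Φ * Z₂)).re ≤ δ * (frobNorm Z₁ * frobNorm Z₂) := by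
  by_cases h1 : frobNorm Z₁ = 0
  · have hz : Z₁ = 0 := frobNorm_eq_zero h1
    subst hz
    rw [Matrix.mul_zero, mip_zero_left, mip_zero_left, h1]
    simp
  by_cases h2 : frobNorm Z₂ = 0
  · have hz : Z₂ = 0 := frobNorm_eq_zero h2
    subst hz
    rw [Matrix.mul_zero, mip, mip, Matrix.mul_zero, Matrix.mul_zero, Matrix.trace_zero, h2]
    simp
  have ha : 0 < frobNorm Z₁ := lt_of_le_of_ne (frobNorm_nonneg _) (Ne.symm h1)
  have hb : 0 < frobNorm Z₂ := lt_of_le_of_ne (frobNorm_nonneg _) (Ne.symm h2)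
  set c : ℝ := Real.sqrt (frobNorm Z₂ / frobNorm Z₁) with hcdef
  have hc0 : 0 < c := Real.sqrt_pos.mpr (div_pos hb ha)
  have hc2 : c ^ 2 = frobNorm Z₂ / frobNorm Z₁ := Real.sq_sqrt (le_of_lt (div_pos hb ha))
  set Z₁' := ((c:ℂ)) • Z₁ with hZ1'
  set Z₂' := (((c⁻¹ : ℝ):ℂ)) • Z₂ with hZ2'
  have hsupp : (rowSupp Z₁' ∪ rowSupp Z₂').card ≤ t := by
    refine le_trans (Finset.card_le_card ?_) h
    exact Finset.union_subset_union (rowSupp_smul_subset _ _) (rowSupp_smul_subset _ _)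
  have hbase := polar_base hRIC Z₁' Z₂' hsupp
  have e1 : mip Z₁' Z₂' = mip Z₁ Z₂ := by
    rw [hZ1', hZ2', mip_real_smul_left, mip_real_smul_right]
    rw [← mul_assoc, ← Complex.ofReal_mul]
    rw [mul_inv_cancel₀ (ne_of_gt hc0)]
    simp
  have e2 : mip (Φ * Z₁') (Φ * Z₂') = mip (Φ * Z₁) (Φ * Z₂) := by
    rw [hZ1', hZ2', Matrix.mul_smul, Matrix.mul_smul, mip_real_smul_left, mip_real_smul_right]
    rw [← mul_assoc, ← Complex.ofReal_mul]
    rw [mul_inv_cancel₀ (ne_of_gt hc0)]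
    simp
  have e3 : frobNorm Z₁' = c * frobNorm Z₁ := frobNorm_real_smul c (le_of_lt hc0) Z₁
  have e4 : frobNorm Z₂' = c⁻¹ * frobNorm Z₂ :=
    frobNorm_real_smul c⁻¹ (le_of_lt (inv_pos.mpr hc0)) Z₂
  rw [e1, e2, e3, e4] at hbase
  have e5 : (c * frobNorm Z₁) ^ 2 = frobNorm Z₂ * frobNorm Z₁ := by
    rw [mul_pow, hc2]
    field_simp
  have e6 : (c⁻¹ * frobNorm Z₂) ^ 2 = frobNorm Z₁ * frobNorm Z₂ := by
    rw [mul_pow, inv_pow, hc2]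
    field_simp
  rw [e5, e6] at hbase
  calc (mip Z₁ Z₂).re - (mip (Φ * Z₁) (Φ * Z₂)).re
      ≤ δ * (frobNorm Z₂ * frobNorm Z₁ + frobNorm Z₁ * frobNorm Z₂) / 2 := hbase
    _ = δ * (frobNorm Z₁ * frobNorm Z₂) := by ring

/-- Simple sqrt comparison helper. -/
lemma sqrt_bound {x y c : ℝ} (hy : 0 ≤ y) (hc : 0 ≤ c) (h : x ^ 2 ≤ c * y ^ 2) :
    x ≤ Real.sqrt c * y := by
  have hx : x ≤ |x| := le_abs_self x
  have : |x| = Real.sqrt (x ^ 2) := (Real.sqrt_sq_eq_abs x).symm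
  calc x ≤ |x| := hx
    _ = Real.sqrt (x ^ 2) := this
    _ ≤ Real.sqrt (c * y ^ 2) := Real.sqrt_le_sqrt h
    _ = Real.sqrt c * y := by
        rw [Real.sqrt_mul hc, Real.sqrt_sq hy]

/-- The quadratic inequality resolution used in Foucart's lemma. -/
lemma quad_bound {x a b δ : ℝ} (hx : 0 ≤ x) (ha : 0 ≤ a) (hb : 0 ≤ b)
    (hδ0 : 0 ≤ δ) (hδ1 : δ < 1) (h : x ^ 2 ≤ (δ * x + b) ^ 2 + a ^ 2) :
    x ≤ a / Real.sqrt (1 - δ ^ 2) + b / (1 - δ) := by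
  have h1δ : 0 < 1 - δ := by linarith
  have h1δ2 : 0 < 1 - δ ^ 2 := by nlinarith
  set u := b / (1 - δ) with hu
  have hu0 : 0 ≤ u := div_nonneg hb h1δ.le
  have hbu : b = u * (1 - δ) := by rw [hu]; field_simp
  set s := Real.sqrt (1 - δ ^ 2) with hs
  have hs2 : s ^ 2 = 1 - δ ^ 2 := Real.sq_sqrt h1δ2.le
  have hs0 : 0 < s := Real.sqrt_pos.mpr h1δ2
  by_cases hxu : x ≤ u
  · have : 0 ≤ a / s := div_nonneg ha hs0.le
    linarith
  · push_neg at hxu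
    have h' : x ^ 2 ≤ (δ * x + u * (1 - δ)) ^ 2 + a ^ 2 := by rw [← hbu]; exact h
    have hexp : (s * (x - u)) ^ 2 = (1 - δ ^ 2) * (x - u) ^ 2 := by rw [mul_pow, hs2]
    have hkey : (s * (x - u)) ^ 2 ≤ a ^ 2 := by
      rw [hexp]
      nlinarith [h', mul_nonneg (mul_nonneg h1δ.le hu0) (sub_pos.mpr hxu).le]
    have hpos : 0 < s * (x - u) := mul_pos hs0 (by linarith)
    have hle : s * (x - u) ≤ a := by
      have := Real.sqrt_le_sqrt hkey
      rwa [Real.sqrt_sq hpos.le, Real.sqrt_sq ha] at this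
    have : x - u ≤ a / s := by
      rw [le_div_iff₀ hs0]
      linarith [hle]
    linarith

end Polar

section Proj
variable {M N L : ℕ}

/-- The orthogonal projection onto the row space of `Φ`. -/
noncomputable def Pm (Φ : Matrix (Fin M) (Fin N) ℂ) : Matrix (Fin N) (Fin N) ℂ :=
  Φᴴ * ((Φ * Φᴴ)⁻¹ * Φ)

variable {Φ : Matrix (Fin M) (Fin N) ℂ}

lemma gram_herm (Φ : Matrix (Fin M) (Fin N) ℂ) : (Φ * Φᴴ)ᴴ = Φ * Φᴴ := by
  rw [Matrix.conjTranspose_mul, Matrix.conjTranspose_conjTranspose]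

lemma gram_inv_herm (Φ : Matrix (Fin M) (Fin N) ℂ) : ((Φ * Φᴴ)⁻¹)ᴴ = (Φ * Φᴴ)⁻¹ := by
  rw [Matrix.conjTranspose_nonsing_inv, gram_herm]

lemma Pm_herm (Φ : Matrix (Fin M) (Fin N) ℂ) : (Pm Φ)ᴴ = Pm Φ := by
  rw [Pm, Matrix.conjTranspose_mul, Matrix.conjTranspose_mul, gram_inv_herm,
    Matrix.conjTranspose_conjTranspose]
  rw [Matrix.mul_assoc]

lemma inv_gram_cancel (hinv : IsUnit (Φ * Φᴴ)) (B : Matrix (Fin M) (Fin L) ℂ) :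
    (Φ * Φᴴ)⁻¹ * ((Φ * Φᴴ) * B) = B := by
  have hdet : IsUnit (Φ * Φᴴ).det := (Matrix.isUnit_iff_isUnit_det _).mp hinv
  rw [← Matrix.mul_assoc, Matrix.nonsing_inv_mul _ hdet, Matrix.one_mul]

lemma mul_Pm (hinv : IsUnit (Φ * Φᴴ)) : Φ * Pm Φ = Φ := by
  have hdet : IsUnit (Φ * Φᴴ).det := (Matrix.isUnit_iff_isUnit_det _).mp hinv
  rw [Pm, ← Matrix.mul_assoc, ← Matrix.mul_assoc, Matrix.mul_nonsing_inv _ hdet,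
    Matrix.one_mul]

lemma Pm_idem (hinv : IsUnit (Φ * Φᴴ)) : Pm Φ * Pm Φ = Pm Φ := by
  rw [Pm]
  simp only [Matrix.mul_assoc]
  rw [← Matrix.mul_assoc Φ Φᴴ, inv_gram_cancel hinv]

/-- orthogonality: the projection part is mip-orthogonal to the complement part -/
lemma mip_Pm_orth (hinv : IsUnit (Φ * Φᴴ)) (Z W : Matrix (Fin N) (Fin L) ℂ) :
    mip (Pm Φ * Z) (W - Pm Φ * W) = 0 := by
  rw [mip_mul_left, Pm_herm]
  have : Pm Φ * (W - Pm Φ * W) = 0 := by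
    rw [Matrix.mul_sub, ← Matrix.mul_assoc, Pm_idem hinv, sub_self]
  rw [this, mip]
  simp

lemma mip_Pm_self (hinv : IsUnit (Φ * Φᴴ)) (Z : Matrix (Fin N) (Fin L) ℂ) :
    (mip Z (Pm Φ * Z)).re = frobNorm (Pm Φ * Z) ^ 2 := by
  rw [← mip_self_re]
  congr 1
  rw [mip_mul_left, Pm_herm, ← Matrix.mul_assoc, Pm_idem hinv]

/-- the projected norm equals the P-RIC trace quantity -/
lemma Pm_norm_eq_trace (hinv : IsUnit (Φ * Φᴴ)) (Z : Matrix (Fin N) (Fin L) ℂ) :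
    frobNorm (Pm Φ * Z) ^ 2 = (Matrix.trace ((Φ * Z)ᴴ * ((Φ * Φᴴ)⁻¹ * (Φ * Z)))).re := by
  rw [← mip_self_re, mip]
  have key : (Pm Φ * Z)ᴴ * (Pm Φ * Z) = (Φ * Z)ᴴ * ((Φ * Φᴴ)⁻¹ * (Φ * Z)) := by
    rw [Matrix.conjTranspose_mul, Pm_herm, Matrix.conjTranspose_mul, Pm]
    simp only [Matrix.mul_assoc]
    rw [← Matrix.mul_assoc Φ Φᴴ, inv_gram_cancel hinv]
  rw [key]

lemma frob_sub_Pm (hinv : IsUnit (Φ * Φᴴ)) (Z : Matrix (Fin N) (Fin L) ℂ) :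
    frobNorm (Z - Pm Φ * Z) ^ 2 = frobNorm Z ^ 2 - frobNorm (Pm Φ * Z) ^ 2 := by
  have h := frob_sub_sq Z (Pm Φ * Z)
  rw [mip_Pm_self hinv] at h
  rw [h]
  ring

/-- The complementary projection is small on sparse matrices, by the P-RIC. -/
lemma Pm_compl_small {t : ℕ} {γ : ℝ} (hinv : IsUnit (Φ * Φᴴ))
    (hPRIC : IsPRIC L Φ t γ) (Z : Matrix (Fin N) (Fin L) ℂ) (hZ : (rowSupp Z).card ≤ t) :
    frobNorm (Z - Pm Φ * Z) ^ 2 ≤ γ * frobNorm Z ^ 2 := by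
  have h1 := hPRIC Z hZ
  rw [← Pm_norm_eq_trace hinv] at h1
  rw [frob_sub_Pm hinv]
  nlinarith [h1]

end Proj

section Feedback
variable {M N L : ℕ}

lemma feedback_off_supp (Φ : Matrix (Fin M) (Fin N) ℂ) (T : Finset (Fin N))
    (X : Matrix (Fin N) (Fin L) ℂ) {i : Fin N} (h : i ∉ T) :
    feedback Φ T X i = 0 := by
  funext j
  simp [feedback, h]

lemma mul_rowRestrict (Φ : Matrix (Fin M) (Fin N) ℂ) (T : Finset (Fin N))
    (Z : Matrix (Fin N) (Fin L) ℂ) :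
    Φ * rowRestrict T Z = colSub Φ T * rowSub T Z := by
  ext a b
  rw [Matrix.mul_apply, Matrix.mul_apply]
  have hterm : ∀ j, Φ a j * rowRestrict T Z j b = if j ∈ T then Φ a j * Z j b else 0 := by
    intro j
    by_cases h : j ∈ T <;> simp [rowRestrict, h]
  rw [Finset.sum_congr rfl fun j _ => hterm j, Finset.sum_ite_mem, Finset.univ_inter]
  exact (Finset.sum_coe_sort T (fun i => Φ a i * Z i b)).symm

/-- Splitting a product over a row set and its complement. -/
lemma mul_split (Φ : Matrix (Fin M) (Fin N) ℂ) (T : Finset (Fin N))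
    (Z : Matrix (Fin N) (Fin L) ℂ) :
    Φ * Z = colSub Φ T * rowSub T Z + colSub Φ Tᶜ * rowSub Tᶜ Z := by
  rw [← mul_rowRestrict, ← mul_rowRestrict, ← Matrix.mul_add]
  congr 1
  ext i j
  by_cases h : i ∈ T <;> simp [rowRestrict, h]

lemma rowSub_feedback (Φ : Matrix (Fin M) (Fin N) ℂ) (T : Finset (Fin N))
    (X : Matrix (Fin N) (Fin L) ℂ) :
    rowSub T (feedback Φ T X) =
      rowSub T X +
        ((colSub Φ T)ᴴ * colSub Φ T)⁻¹ * (colSub Φ T)ᴴ * (colSub Φ Tᶜ * rowSub Tᶜ X) := by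
  ext i j
  show feedback Φ T X i.val j = _
  rw [feedback, dif_pos i.2]

/-- The feedback satisfies the least-squares normal equations on `T`. -/
lemma feedback_normal (Φ : Matrix (Fin M) (Fin N) ℂ) (T : Finset (Fin N))
    (Xs : Matrix (Fin N) (Fin L) ℂ) (Y : Matrix (Fin M) (Fin L) ℂ)
    (hY : Y = Φ * Xs) (hTinv : IsUnit ((colSub Φ T)ᴴ * colSub Φ T)) :
    (colSub Φ T)ᴴ * (Y - Φ * feedback Φ T Xs) = 0 := by
  set C := colSub Φ T with hC
  set D := colSub Φ Tᶜ * rowSub Tᶜ Xs with hD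
  have hdet : IsUnit (Cᴴ * C).det := (Matrix.isUnit_iff_isUnit_det _).mp hTinv
  have hW : Φ * feedback Φ T Xs = C * rowSub T Xs + C * ((Cᴴ * C)⁻¹ * (Cᴴ * D)) := by
    have hsupp : rowRestrict T (feedback Φ T Xs) = feedback Φ T Xs := by
      ext i j
      by_cases h : i ∈ T
      · simp [rowRestrict, h]
      · simp [rowRestrict, h, congrFun (feedback_off_supp Φ T Xs h) j]
    rw [← hsupp, mul_rowRestrict, rowSub_feedback, Matrix.mul_add, Matrix.mul_assoc]
  have hYs : Y = C * rowSub T Xs + D := by rw [hY, mul_split Φ T Xs]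
  rw [hW, hYs]
  have : C * rowSub T Xs + D - (C * rowSub T Xs + C * ((Cᴴ * C)⁻¹ * (Cᴴ * D)))
      = D - C * ((Cᴴ * C)⁻¹ * (Cᴴ * D)) := by abel
  rw [this, Matrix.mul_sub]
  rw [← Matrix.mul_assoc Cᴴ C _, ← Matrix.mul_assoc (Cᴴ * C) _ _,
    Matrix.mul_nonsing_inv _ hdet, Matrix.one_mul]
  exact sub_self _

/-- mip-orthogonality form of the normal equations. -/
lemma mip_normal (Φ : Matrix (Fin M) (Fin N) ℂ) (T : Finset (Fin N))
    (Xs V : Matrix (Fin N) (Fin L) ℂ) (Y : Matrix (Fin M) (Fin L) ℂ)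
    (hY : Y = Φ * Xs) (hTinv : IsUnit ((colSub Φ T)ᴴ * colSub Φ T)) :
    mip (rowRestrict T V) (Φᴴ * (Y - Φ * feedback Φ T Xs)) = 0 := by
  have hnorm := feedback_normal Φ T Xs Y hY hTinv
  have hrow : ∀ i ∈ T, ∀ b, (Φᴴ * (Y - Φ * feedback Φ T Xs)) i b = 0 := by
    intro i hi b
    have h0 := congrFun (congrFun hnorm ⟨i, hi⟩) b
    rw [Matrix.mul_apply] at h0
    simp only [Matrix.zero_apply] at h0
    rw [Matrix.mul_apply, ← h0]
    exact Finset.sum_congr rfl fun j _ => rfl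
  rw [mip_eq_sum]
  refine Finset.sum_eq_zero fun i _ => Finset.sum_eq_zero fun b _ => ?_
  by_cases hi : i ∈ T
  · rw [hrow i hi b, mul_zero]
  · simp [rowRestrict, hi]

end Feedback

section Helpers
variable {N L : ℕ}

lemma mip_sub_left {m n : Type*} [Fintype m] [Fintype n] (A B C : Matrix m n ℂ) :
    mip (A - B) C = mip A C - mip B C := by
  simp [mip, Matrix.conjTranspose_sub, Matrix.sub_mul]

lemma mip_neg_left {m n : Type*} [Fintype m] [Fintype n] (A B : Matrix m n ℂ) :
    mip (-A) B = - mip A B := by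
  simp [mip]

lemma mip_add_left {m n : Type*} [Fintype m] [Fintype n] (A B C : Matrix m n ℂ) :
    mip (A + B) C = mip A C + mip B C := by
  simp [mip, Matrix.conjTranspose_add, Matrix.add_mul]

lemma le_of_sq_le_sq {x z : ℝ} (hx : 0 ≤ x) (hz : 0 ≤ z) (h : x ^ 2 ≤ z ^ 2) : x ≤ z := by
  have := Real.sqrt_le_sqrt h
  rwa [Real.sqrt_sq hx, Real.sqrt_sq hz] at this

lemma frob_split (T : Finset (Fin N)) (A : Matrix (Fin N) (Fin L) ℂ) :
    frobNorm A ^ 2 = frobNorm (rowRestrict T A) ^ 2 + frobNorm (rowRestrict Tᶜ A) ^ 2 := by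
  rw [frob_sq_rows, frob_sq_rowRestrict, frob_sq_rowRestrict]
  rw [Finset.sum_add_sum_compl T]

lemma row_mul (A : Matrix (Fin N) (Fin L) ℂ) (R : Matrix (Fin L) (Fin L) ℂ) (i : Fin N) :
    (A * R) i = Rᵀ.mulVec (A i) := by
  funext b
  rw [Matrix.mul_apply, Matrix.mulVec, dotProduct]
  exact Finset.sum_congr rfl fun l _ => by rw [Matrix.transpose_apply, mul_comm]

lemma card_sdiff_le {S T : Finset (Fin N)} (h : S.card ≤ T.card) :
    (S \ T).card ≤ (T \ S).card := by
  have h1 := Finset.card_sdiff_add_card S T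
  have h2 := Finset.card_sdiff_add_card T S
  rw [Finset.union_comm T S] at h2
  omega

lemma ht_compare {Q : Matrix (Fin N) (Fin L) ℂ} {S T : Finset (Fin N)}
    (hcard : (S \ T).card ≤ (T \ S).card)
    (hsel : ∀ i ∈ T, ∀ m ∉ T, vecNorm (Q m) ≤ vecNorm (Q i)) :
    ∑ i ∈ S \ T, vecNorm (Q i) ^ 2 ≤ ∑ i ∈ T \ S, vecNorm (Q i) ^ 2 := by
  rcases Finset.eq_empty_or_nonempty (S \ T) with h | h
  · rw [h, Finset.sum_empty]
    exact Finset.sum_nonneg fun i _ => by positivity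
  · have hTS : (T \ S).Nonempty := by
      rw [← Finset.card_pos] at h ⊢
      omega
    obtain ⟨m₀, hm₀, hmin⟩ := Finset.exists_min_image (T \ S) (fun i => vecNorm (Q i) ^ 2) hTS
    have hm₀T : m₀ ∈ T := (Finset.mem_sdiff.mp hm₀).1
    have hub : ∀ i ∈ S \ T, vecNorm (Q i) ^ 2 ≤ vecNorm (Q m₀) ^ 2 := by
      intro i hi
      have hiT : i ∉ T := (Finset.mem_sdiff.mp hi).2
      have := hsel m₀ hm₀T i hiT
      exact pow_le_pow_left₀ (vecNorm_nonneg _) this 2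
    calc ∑ i ∈ S \ T, vecNorm (Q i) ^ 2 ≤ (S \ T).card • (vecNorm (Q m₀) ^ 2) :=
          Finset.sum_le_card_nsmul _ _ _ hub
      _ ≤ (T \ S).card • (vecNorm (Q m₀) ^ 2) := by
          have h0 : (0:ℝ) ≤ vecNorm (Q m₀) ^ 2 := by positivity
          rw [nsmul_eq_mul, nsmul_eq_mul]
          exact mul_le_mul_of_nonneg_right (by exact_mod_cast hcard) h0
      _ ≤ ∑ i ∈ T \ S, vecNorm (Q i) ^ 2 := Finset.card_nsmul_le_sum _ _ _ hmin

lemma rowSupp_subset_of {T : Finset (Fin N)} {W : Matrix (Fin N) (Fin L) ℂ}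
    (h : ∀ i ∉ T, W i = 0) : rowSupp W ⊆ T := by
  classical
  intro i hi
  by_contra hiT
  have hne : W i ≠ 0 := by simpa [rowSupp] using hi
  exact hne (h i hiT)

end Helpers

section Step
variable {M N L : ℕ}

set_option maxHeartbeats 4000000 in
/-- One-step error bound for the OSNST+HT+f-FB iteration. -/
lemma step_bound {s t tQ : ℕ} {Φ : Matrix (Fin M) (Fin N) ℂ} (hinv : IsUnit (Φ * Φᴴ))
    {X : Matrix (Fin N) (Fin L) ℂ} {E Y : Matrix (Fin M) (Fin L) ℂ}
    (hY : Y = Φ * X + E) (hXs : (rowSupp X).card ≤ s)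
    {δ γ θ α : ℝ} (hδ0 : 0 ≤ δ) (hδ1 : δ < 1) (hγ : 0 ≤ γ) (hθ : 0 ≤ θ) (hα : 1 ≤ α)
    (hL : 0 < L)
    (hRIC : IsRIC L Φ t δ) (hPRIC : IsPRIC L Φ t γ)
    (hURIC : IsUpperRIC L ((Φ * Φᴴ)⁻¹ * Φ) tQ θ)
    {Wp Xs Q : Matrix (Fin N) (Fin L) ℂ} {Rm : Matrix (Fin L) (Fin L) ℂ} {T : Finset (Fin N)}
    (hsT : s + T.card ≤ tQ) (htQt : tQ ≤ t) (hsTc : s ≤ T.card)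
    (hVp : (rowSupp (X - Wp)).card ≤ t)
    (hNST : Xs = Wp + Φᴴ * ((Φ * Φᴴ)⁻¹ * (Y - Φ * Wp)))
    (hQ : Xs = Q * Rm) (hRu : IsUnit Rm) (hcond : sigmaMax Rm ≤ α * sigmaMin Rm)
    (hsel : ∀ i ∈ T, ∀ m ∉ T, vecNorm (Q m) ≤ vecNorm (Q i))
    (hTinv : IsUnit ((colSub Φ T)ᴴ * colSub Φ T)) :
    frobNorm (X - feedback Φ T Xs) ≤
      (Real.sqrt 2 * α * γ / Real.sqrt (1 - δ ^ 2)) * frobNorm (X - Wp) +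
      (Real.sqrt (1 + δ) / (1 - δ) +
        Real.sqrt 2 * α * Real.sqrt (1 + θ) / Real.sqrt (1 - δ ^ 2)) * frobNorm E := by
  classical
  have hdet : IsUnit (Φ * Φᴴ).det := (Matrix.isUnit_iff_isUnit_det _).mp hinv
  set S : Finset (Fin N) := rowSupp X with hS
  set Vp : Matrix (Fin N) (Fin L) ℂ := X - Wp with hVpdef
  set Wc : Matrix (Fin N) (Fin L) ℂ := feedback Φ T Xs with hWc
  set V : Matrix (Fin N) (Fin L) ℂ := X - Wc with hVdef
  set G : Matrix (Fin N) (Fin L) ℂ := X - Xs with hGdef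
  -- Y equals Φ Xs
  have hYXs : Y = Φ * Xs := by
    rw [hNST, Matrix.mul_add, ← Matrix.mul_assoc Φ Φᴴ _,
      ← Matrix.mul_assoc (Φ * Φᴴ) _ _, Matrix.mul_nonsing_inv _ hdet, Matrix.one_mul]
    abel
  -- the NST error decomposition
  have hGdecomp : G = (Vp - Pm Φ * Vp) - (Φᴴ * (Φ * Φᴴ)⁻¹) * E := by
    rw [hGdef, hNST, hY, hVpdef]
    have h1 : Φ * X + E - Φ * Wp = Φ * (X - Wp) + E := by
      rw [Matrix.mul_sub]; abel
    rw [h1, Matrix.mul_add, Matrix.mul_add, Pm]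
    rw [Matrix.mul_assoc Φᴴ ((Φ * Φᴴ)⁻¹ * Φ) (X - Wp), Matrix.mul_assoc (Φ * Φᴴ)⁻¹ Φ (X - Wp)]
    rw [Matrix.mul_assoc Φᴴ (Φ * Φᴴ)⁻¹ E]
    abel
  -- support bookkeeping
  have hWcsupp : rowSupp Wc ⊆ T := rowSupp_subset_of fun i hi => feedback_off_supp Φ T Xs hi
  have hVsupp : rowSupp V ⊆ S ∪ T := by
    refine le_trans (rowSupp_sub_subset X Wc) ?_
    exact Finset.union_subset_union (le_refl _) hWcsupp
  have hVcard : (rowSupp V).card ≤ tQ := by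
    calc (rowSupp V).card ≤ (S ∪ T).card := Finset.card_le_card hVsupp
      _ ≤ S.card + T.card := Finset.card_union_le S T
      _ ≤ s + T.card := by omega
      _ ≤ tQ := hsT
  set U : Finset (Fin N) := (S \ T) ∪ (T \ S) with hU
  have hUsub : U ⊆ S ∪ T := by
    rw [hU]
    exact Finset.union_subset_union (Finset.sdiff_subset) (Finset.sdiff_subset)
  have hUcard : U.card ≤ tQ := by
    calc U.card ≤ (S ∪ T).card := Finset.card_le_card hUsub
      _ ≤ S.card + T.card := Finset.card_union_le S T
      _ ≤ s + T.card := by omega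
      _ ≤ tQ := hsT
  set Zr : Matrix (Fin N) (Fin L) ℂ := rowRestrict U G with hZr
  have hZrcard : (rowSupp Zr).card ≤ tQ :=
    le_trans (Finset.card_le_card (rowSupp_rowRestrict_subset U G)) hUcard
  -- dual bound : ‖Zr‖ ≤ γ‖Vp‖ + √(1+θ)‖E‖
  have hZrbound : frobNorm Zr ≤ γ * frobNorm Vp + Real.sqrt (1 + θ) * frobNorm E := by
    have hsq : frobNorm Zr ^ 2 = (mip Zr G).re := by
      have e : mip Zr G = mip Zr Zr := by
        rw [hZr]
        exact mip_rowRestrict U G G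
      rw [e, mip_self_re]
    have hdecomp : (mip Zr G).re =
        (mip Zr (Vp - Pm Φ * Vp)).re - (mip Zr ((Φᴴ * (Φ * Φᴴ)⁻¹) * E)).re := by
      rw [hGdecomp, mip_sub_right]
      simp [Complex.sub_re]
    -- term 1
    have ht1 : (mip Zr (Vp - Pm Φ * Vp)).re ≤ γ * (frobNorm Zr * frobNorm Vp) := by
      have horth : mip Zr (Vp - Pm Φ * Vp) = mip (Zr - Pm Φ * Zr) (Vp - Pm Φ * Vp) := by
        have h0 := mip_Pm_orth hinv Zr Vp
        rw [mip_sub_left]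
        rw [h0]
        ring
      rw [horth]
      have hcs := re_mip_le (Zr - Pm Φ * Zr) (Vp - Pm Φ * Vp)
      have hz : frobNorm (Zr - Pm Φ * Zr) ^ 2 ≤ γ * frobNorm Zr ^ 2 :=
        Pm_compl_small hinv hPRIC Zr (le_trans hZrcard htQt)
      have hv : frobNorm (Vp - Pm Φ * Vp) ^ 2 ≤ γ * frobNorm Vp ^ 2 :=
        Pm_compl_small hinv hPRIC Vp hVp
      have hprod : frobNorm (Zr - Pm Φ * Zr) * frobNorm (Vp - Pm Φ * Vp) ≤
          γ * (frobNorm Zr * frobNorm Vp) := by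
        apply le_of_sq_le_sq
          (mul_nonneg (frobNorm_nonneg _) (frobNorm_nonneg _))
          (mul_nonneg hγ (mul_nonneg (frobNorm_nonneg _) (frobNorm_nonneg _)))
        calc (frobNorm (Zr - Pm Φ * Zr) * frobNorm (Vp - Pm Φ * Vp)) ^ 2
            = frobNorm (Zr - Pm Φ * Zr) ^ 2 * frobNorm (Vp - Pm Φ * Vp) ^ 2 := by ring
          _ ≤ (γ * frobNorm Zr ^ 2) * (γ * frobNorm Vp ^ 2) := by
              apply mul_le_mul hz hv (sq_nonneg _) (mul_nonneg hγ (sq_nonneg _))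
          _ = (γ * (frobNorm Zr * frobNorm Vp)) ^ 2 := by ring
      linarith
    -- term 2
    have ht2 : -(mip Zr ((Φᴴ * (Φ * Φᴴ)⁻¹) * E)).re ≤
        Real.sqrt (1 + θ) * (frobNorm Zr * frobNorm E) := by
      have hadj : mip (((Φ * Φᴴ)⁻¹ * Φ) * Zr) E = mip Zr ((Φᴴ * (Φ * Φᴴ)⁻¹) * E) := by
        rw [mip_mul_left]
        have : ((Φ * Φᴴ)⁻¹ * Φ)ᴴ = Φᴴ * (Φ * Φᴴ)⁻¹ := by
          rw [Matrix.conjTranspose_mul, gram_inv_herm]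
        rw [this]
      rw [← hadj]
      have hneg : -(mip (((Φ * Φᴴ)⁻¹ * Φ) * Zr) E).re = (mip (-(((Φ * Φᴴ)⁻¹ * Φ) * Zr)) E).re := by
        rw [mip_neg_left]
        simp
      rw [hneg]
      calc (mip (-(((Φ * Φᴴ)⁻¹ * Φ) * Zr)) E).re
          ≤ frobNorm (-(((Φ * Φᴴ)⁻¹ * Φ) * Zr)) * frobNorm E := re_mip_le _ _
        _ = frobNorm (((Φ * Φᴴ)⁻¹ * Φ) * Zr) * frobNorm E := by rw [frobNorm_neg]
        _ ≤ (Real.sqrt (1 + θ) * frobNorm Zr) * frobNorm E := by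
            apply mul_le_mul_of_nonneg_right ?_ (frobNorm_nonneg E)
            apply sqrt_bound (frobNorm_nonneg _) (by linarith)
            exact hURIC Zr hZrcard
        _ = Real.sqrt (1 + θ) * (frobNorm Zr * frobNorm E) := by ring
    -- combine
    have hkey : frobNorm Zr ^ 2 ≤ frobNorm Zr * (γ * frobNorm Vp + Real.sqrt (1 + θ) * frobNorm E) := by
      rw [hsq, hdecomp]
      calc (mip Zr (Vp - Pm Φ * Vp)).re - (mip Zr ((Φᴴ * (Φ * Φᴴ)⁻¹) * E)).re
          ≤ γ * (frobNorm Zr * frobNorm Vp) + Real.sqrt (1 + θ) * (frobNorm Zr * frobNorm E) := by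
            linarith
        _ = frobNorm Zr * (γ * frobNorm Vp + Real.sqrt (1 + θ) * frobNorm E) := by ring
    rcases eq_or_lt_of_le (frobNorm_nonneg Zr) with h0 | h0
    · rw [← h0]
      have h1 : 0 ≤ γ * frobNorm Vp := mul_nonneg hγ (frobNorm_nonneg _)
      have h2 : 0 ≤ Real.sqrt (1 + θ) * frobNorm E :=
        mul_nonneg (Real.sqrt_nonneg _) (frobNorm_nonneg _)
      linarith
    · have hkey' : frobNorm Zr * frobNorm Zr ≤
          frobNorm Zr * (γ * frobNorm Vp + Real.sqrt (1 + θ) * frobNorm E) := by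
        rw [← pow_two]
        exact hkey
      exact le_of_mul_le_mul_left hkey' h0
  -- HT step : the tail bound a ≤ √2 α (γ‖Vp‖ + √(1+θ)‖E‖)
  have hXrow : ∀ i, i ∉ S → X i = 0 := by
    intro i hi
    exact rowSupp_apply (by rwa [← hS])
  have hVTc : rowRestrict Tᶜ V = rowRestrict (S \ T) X := by
    ext i j
    by_cases hiT : i ∈ T
    · have h1 : i ∉ Tᶜ := by simp [hiT]
      have h2 : i ∉ S \ T := by simp [hiT]
      simp [rowRestrict, h1, h2]
    · have h1 : i ∈ Tᶜ := by simp [hiT]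
      have hWci : Wc i = 0 := by rw [hWc]; exact feedback_off_supp Φ T Xs hiT
      by_cases hiS : i ∈ S
      · have h2 : i ∈ S \ T := by simp [hiS, hiT]
        simp [rowRestrict, h1, h2, hVdef, Matrix.sub_apply, congrFun hWci j]
      · have h2 : i ∉ S \ T := by simp [hiS]
        simp [rowRestrict, h1, h2, hVdef, Matrix.sub_apply, congrFun hWci j,
          congrFun (hXrow i hiS) j]
  set a : ℝ := frobNorm (rowRestrict Tᶜ V) with ha
  -- row formulas
  have hXsrow : ∀ i : Fin N, Xs i = Rmᵀ.mulVec (Q i) := by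
    intro i
    rw [hQ]
    exact row_mul Q Rm i
  have hdetR : IsUnit Rm.det := (Matrix.isUnit_iff_isUnit_det _).mp hRu
  have hQrow : ∀ i : Fin N, Q i = (Rm⁻¹)ᵀ.mulVec (Xs i) := by
    intro i
    have : Xs * Rm⁻¹ = Q := by
      rw [hQ, Matrix.mul_assoc, Matrix.mul_nonsing_inv _ hdetR, Matrix.mul_one]
    rw [← this]
    exact row_mul Xs Rm⁻¹ i
  -- sigma facts
  have hσmin : 0 < sigmaMin Rm := sigmaMin_pos hL hRu (by linarith) hcond
  have hσinv : sigmaMax Rm⁻¹ ≤ 1 / sigmaMin Rm := sigmaMax_inv_le hRu hσmin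
  have hσprod : sigmaMax Rm * sigmaMax Rm⁻¹ ≤ α := by
    calc sigmaMax Rm * sigmaMax Rm⁻¹ ≤ sigmaMax Rm * (1 / sigmaMin Rm) :=
          mul_le_mul_of_nonneg_left hσinv (sigmaMax_nonneg Rm)
      _ = sigmaMax Rm / sigmaMin Rm := by ring
      _ ≤ α := by
          rw [div_le_iff₀ hσmin]
          linarith [hcond]
  -- bound ‖Xs_(S\T)‖ ≤ α ‖Xs_(T\S)‖
  have hXsST : frobNorm (rowRestrict (S \ T) Xs) ≤ α * frobNorm (rowRestrict (T \ S) Xs) := by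
    apply le_of_sq_le_sq (frobNorm_nonneg _)
      (mul_nonneg (by linarith) (frobNorm_nonneg _))
    rw [mul_pow, frob_sq_rowRestrict, frob_sq_rowRestrict]
    have hb1 : ∑ i ∈ S \ T, vecNorm (Xs i) ^ 2 ≤
        sigmaMax Rm ^ 2 * ∑ i ∈ S \ T, vecNorm (Q i) ^ 2 := by
      rw [Finset.mul_sum]
      refine Finset.sum_le_sum fun i _ => ?_
      rw [hXsrow i]
      calc vecNorm (Rmᵀ.mulVec (Q i)) ^ 2 ≤ (sigmaMax Rm * vecNorm (Q i)) ^ 2 :=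
            pow_le_pow_left₀ (vecNorm_nonneg _) (transpose_mulVec_le Rm (Q i)) 2
        _ = sigmaMax Rm ^ 2 * vecNorm (Q i) ^ 2 := by ring
    have hb2 : ∑ i ∈ S \ T, vecNorm (Q i) ^ 2 ≤ ∑ i ∈ T \ S, vecNorm (Q i) ^ 2 := by
      apply ht_compare _ hsel
      apply card_sdiff_le
      omega
    have hb3 : ∑ i ∈ T \ S, vecNorm (Q i) ^ 2 ≤
        sigmaMax Rm⁻¹ ^ 2 * ∑ i ∈ T \ S, vecNorm (Xs i) ^ 2 := by
      rw [Finset.mul_sum]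
      refine Finset.sum_le_sum fun i _ => ?_
      conv_lhs => rw [hQrow i]
      calc vecNorm ((Rm⁻¹)ᵀ.mulVec (Xs i)) ^ 2 ≤ (sigmaMax Rm⁻¹ * vecNorm (Xs i)) ^ 2 :=
            pow_le_pow_left₀ (vecNorm_nonneg _) (transpose_mulVec_le Rm⁻¹ (Xs i)) 2
        _ = sigmaMax Rm⁻¹ ^ 2 * vecNorm (Xs i) ^ 2 := by ring
    have hchain : ∑ i ∈ S \ T, vecNorm (Xs i) ^ 2 ≤
        (sigmaMax Rm * sigmaMax Rm⁻¹) ^ 2 * ∑ i ∈ T \ S, vecNorm (Xs i) ^ 2 := by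
      have h1 : (0:ℝ) ≤ sigmaMax Rm ^ 2 := sq_nonneg _
      calc ∑ i ∈ S \ T, vecNorm (Xs i) ^ 2
          ≤ sigmaMax Rm ^ 2 * ∑ i ∈ S \ T, vecNorm (Q i) ^ 2 := hb1
        _ ≤ sigmaMax Rm ^ 2 * ∑ i ∈ T \ S, vecNorm (Q i) ^ 2 :=
            mul_le_mul_of_nonneg_left hb2 h1
        _ ≤ sigmaMax Rm ^ 2 * (sigmaMax Rm⁻¹ ^ 2 * ∑ i ∈ T \ S, vecNorm (Xs i) ^ 2) :=
            mul_le_mul_of_nonneg_left hb3 h1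
        _ = (sigmaMax Rm * sigmaMax Rm⁻¹) ^ 2 * ∑ i ∈ T \ S, vecNorm (Xs i) ^ 2 := by ring
    calc ∑ i ∈ S \ T, vecNorm (Xs i) ^ 2
        ≤ (sigmaMax Rm * sigmaMax Rm⁻¹) ^ 2 * ∑ i ∈ T \ S, vecNorm (Xs i) ^ 2 := hchain
      _ ≤ α ^ 2 * ∑ i ∈ T \ S, vecNorm (Xs i) ^ 2 := by
          apply mul_le_mul_of_nonneg_right _ (Finset.sum_nonneg fun i _ => by positivity)
          exact pow_le_pow_left₀
            (mul_nonneg (sigmaMax_nonneg _) (sigmaMax_nonneg _)) hσprod 2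
  -- X restricted to T \ S vanishes, so Xs = -G there
  have hXsTS : frobNorm (rowRestrict (T \ S) Xs) = frobNorm (rowRestrict (T \ S) G) := by
    have : rowRestrict (T \ S) Xs = - rowRestrict (T \ S) G := by
      ext i j
      by_cases h : i ∈ T \ S
      · have hiS : i ∉ S := (Finset.mem_sdiff.mp h).2
        simp [rowRestrict, h, hGdef, Matrix.sub_apply, congrFun (hXrow i hiS) j]
      · simp [rowRestrict, h]
    rw [this, frobNorm_neg]
  -- combine the HT bounds
  set p : ℝ := frobNorm (rowRestrict (S \ T) G) with hp
  set q : ℝ := frobNorm (rowRestrict (T \ S) G) with hq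
  have hp0 : 0 ≤ p := frobNorm_nonneg _
  have hq0 : 0 ≤ q := frobNorm_nonneg _
  have hXGXs : X = G + Xs := by rw [hGdef]; abel
  have ha1 : a ≤ p + α * q := by
    rw [ha, hVTc]
    calc frobNorm (rowRestrict (S \ T) X)
        = frobNorm (rowRestrict (S \ T) G + rowRestrict (S \ T) Xs) := by
          rw [← rowRestrict_add, ← hXGXs]
      _ ≤ p + frobNorm (rowRestrict (S \ T) Xs) := frobNorm_add_le _ _
      _ ≤ p + α * frobNorm (rowRestrict (T \ S) Xs) := by linarith [hXsST]
      _ = p + α * q := by rw [hXsTS]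
  -- Pythagoras on the disjoint union U
  have hdisj : Disjoint (S \ T) (T \ S) := by
    apply Finset.disjoint_left.mpr
    intro x h1 h2
    exact (Finset.mem_sdiff.mp h1).2 (Finset.mem_sdiff.mp h2).1
  have hpyth : p ^ 2 + q ^ 2 = frobNorm Zr ^ 2 := by
    rw [hp, hq, hZr, frob_sq_rowRestrict, frob_sq_rowRestrict, frob_sq_rowRestrict, hU]
    rw [Finset.sum_union hdisj]
  have hZr0 : 0 ≤ frobNorm Zr := frobNorm_nonneg _
  have hsqrt2 : Real.sqrt 2 ^ 2 = 2 := Real.sq_sqrt (by norm_num)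
  have hsqrt2' : 0 ≤ Real.sqrt 2 := Real.sqrt_nonneg 2
  have ha2 : p + α * q ≤ Real.sqrt 2 * α * frobNorm Zr := by
    apply le_of_sq_le_sq (by positivity)
      (mul_nonneg (mul_nonneg hsqrt2' (by linarith)) hZr0)
    have hexp : (Real.sqrt 2 * α * frobNorm Zr) ^ 2 = 2 * α ^ 2 * (p ^ 2 + q ^ 2) := by
      rw [mul_pow, mul_pow, hsqrt2, hpyth]
    rw [hexp]
    nlinarith [sq_nonneg (α*(p - q)), mul_nonneg (mul_nonneg hp0 hq0) (sub_nonneg.mpr hα),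
      mul_nonneg (mul_nonneg (sub_nonneg.mpr hα) (by linarith : (0:ℝ) ≤ α + 1)) (sq_nonneg p)]
  have habound : a ≤ Real.sqrt 2 * α * γ * frobNorm Vp +
      Real.sqrt 2 * α * Real.sqrt (1 + θ) * frobNorm E := by
    calc a ≤ p + α * q := ha1
      _ ≤ Real.sqrt 2 * α * frobNorm Zr := ha2
      _ ≤ Real.sqrt 2 * α * (γ * frobNorm Vp + Real.sqrt (1 + θ) * frobNorm E) := by
          apply mul_le_mul_of_nonneg_left hZrbound (by positivity)
      _ = Real.sqrt 2 * α * γ * frobNorm Vp +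
          Real.sqrt 2 * α * Real.sqrt (1 + θ) * frobNorm E := by ring
  -- Foucart's lemma part
  set VT : Matrix (Fin N) (Fin L) ℂ := rowRestrict T V with hVT
  set b : ℝ := Real.sqrt (1 + δ) * frobNorm E with hbdef
  have hb0 : 0 ≤ b := mul_nonneg (Real.sqrt_nonneg _) (frobNorm_nonneg _)
  have hVTcard : (rowSupp VT).card ≤ t := by
    calc (rowSupp VT).card ≤ T.card := Finset.card_le_card (rowSupp_rowRestrict_subset T V)
      _ ≤ t := by omega
  have hVcard' : (rowSupp V).card ≤ t := le_trans hVcard htQt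
  have hVTbound : frobNorm VT ≤ δ * frobNorm V + b := by
    have hmip0 := mip_normal Φ T Xs V Y hYXs hTinv
    have hYWc : Y - Φ * feedback Φ T Xs = Φ * V + E := by
      rw [hY, hVdef, hWc, Matrix.mul_sub]
      abel
    rw [hYWc, Matrix.mul_add, mip_add_right] at hmip0
    have hzero : (mip VT (Φᴴ * (Φ * V))).re + (mip VT (Φᴴ * E)).re = 0 := by
      have := congrArg Complex.re hmip0
      simpa [Complex.add_re] using this
    have hsqVT : frobNorm VT ^ 2 = (mip VT V).re := by
      have e : mip VT V = mip VT VT := by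
        rw [hVT]
        exact mip_rowRestrict T V V
      rw [e, mip_self_re]
    have hadj1 : mip (Φ * VT) (Φ * V) = mip VT (Φᴴ * (Φ * V)) := mip_mul_left Φ VT (Φ * V)
    have hadj2 : mip (Φ * VT) E = mip VT (Φᴴ * E) := mip_mul_left Φ VT E
    have hpolar : (mip VT V).re - (mip (Φ * VT) (Φ * V)).re ≤
        δ * (frobNorm VT * frobNorm V) := by
      apply polar hδ0 hRIC
      calc (rowSupp VT ∪ rowSupp V).card ≤ ((S ∪ T) ∪ (S ∪ T)).card := by
            apply Finset.card_le_card
            apply Finset.union_subset_union _ hVsupp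
            calc rowSupp VT ⊆ T := rowSupp_rowRestrict_subset T V
              _ ⊆ S ∪ T := Finset.subset_union_right
        _ = (S ∪ T).card := by rw [Finset.union_self]
        _ ≤ S.card + T.card := Finset.card_union_le S T
        _ ≤ t := by omega
    have hΦVT : frobNorm (Φ * VT) ≤ Real.sqrt (1 + δ) * frobNorm VT := by
      apply sqrt_bound (frobNorm_nonneg _) (by linarith)
      exact (hRIC VT hVTcard).2
    have hE : -(mip (Φ * VT) E).re ≤ (Real.sqrt (1 + δ) * frobNorm VT) * frobNorm E := by
      calc -(mip (Φ * VT) E).re = (mip (-(Φ * VT)) E).re := by rw [mip_neg_left]; simp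
        _ ≤ frobNorm (-(Φ * VT)) * frobNorm E := re_mip_le _ _
        _ = frobNorm (Φ * VT) * frobNorm E := by rw [frobNorm_neg]
        _ ≤ (Real.sqrt (1 + δ) * frobNorm VT) * frobNorm E :=
            mul_le_mul_of_nonneg_right hΦVT (frobNorm_nonneg _)
    have hkey : frobNorm VT ^ 2 ≤ frobNorm VT * (δ * frobNorm V + b) := by
      have e1 : (mip VT (Φᴴ * (Φ * V))).re = (mip (Φ * VT) (Φ * V)).re := by rw [hadj1]
      have e2 : (mip VT (Φᴴ * E)).re = (mip (Φ * VT) E).re := by rw [hadj2]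
      calc frobNorm VT ^ 2 = (mip VT V).re := hsqVT
        _ = ((mip VT V).re - (mip (Φ * VT) (Φ * V)).re) +
            ((mip VT (Φᴴ * (Φ * V))).re + (mip VT (Φᴴ * E)).re) - (mip (Φ * VT) E).re := by
            rw [e1, e2]; ring
        _ = ((mip VT V).re - (mip (Φ * VT) (Φ * V)).re) - (mip (Φ * VT) E).re := by
            rw [hzero]; ring
        _ ≤ δ * (frobNorm VT * frobNorm V) + (Real.sqrt (1 + δ) * frobNorm VT) * frobNorm E := by
            linarith [hpolar, hE]
        _ = frobNorm VT * (δ * frobNorm V + b) := by rw [hbdef]; ring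
    rcases eq_or_lt_of_le (frobNorm_nonneg VT) with h0 | h0
    · rw [← h0]
      have : 0 ≤ δ * frobNorm V := mul_nonneg hδ0 (frobNorm_nonneg _)
      linarith
    · have hkey' : frobNorm VT * frobNorm VT ≤ frobNorm VT * (δ * frobNorm V + b) := by
        rw [← pow_two]
        exact hkey
      exact le_of_mul_le_mul_left hkey' h0
  -- quadratic resolution
  have hsplitV : frobNorm V ^ 2 = frobNorm VT ^ 2 + a ^ 2 := by
    rw [ha, hVT]
    exact frob_split T V
  have hquadhyp : frobNorm V ^ 2 ≤ (δ * frobNorm V + b) ^ 2 + a ^ 2 := by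
    rw [hsplitV]
    have h1 : frobNorm VT ^ 2 ≤ (δ * frobNorm V + b) ^ 2 := by
      apply pow_le_pow_left₀ (frobNorm_nonneg _) hVTbound
    linarith
  have ha0 : 0 ≤ a := frobNorm_nonneg _
  have hVfinal : frobNorm V ≤ a / Real.sqrt (1 - δ ^ 2) + b / (1 - δ) :=
    quad_bound (frobNorm_nonneg _) ha0 hb0 hδ0 hδ1 hquadhyp
  -- assemble
  have hσ : 0 < Real.sqrt (1 - δ ^ 2) := Real.sqrt_pos.mpr (by nlinarith)
  have hdiv : a / Real.sqrt (1 - δ ^ 2) ≤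
      (Real.sqrt 2 * α * γ * frobNorm Vp +
        Real.sqrt 2 * α * Real.sqrt (1 + θ) * frobNorm E) / Real.sqrt (1 - δ ^ 2) := by
    exact (div_le_div_iff_of_pos_right hσ).mpr habound
  have heq : (Real.sqrt 2 * α * γ * frobNorm Vp +
        Real.sqrt 2 * α * Real.sqrt (1 + θ) * frobNorm E) / Real.sqrt (1 - δ ^ 2) +
        b / (1 - δ) =
      Real.sqrt 2 * α * γ / Real.sqrt (1 - δ ^ 2) * frobNorm Vp +
        (Real.sqrt (1 + δ) / (1 - δ) +
          Real.sqrt 2 * α * Real.sqrt (1 + θ) / Real.sqrt (1 - δ ^ 2)) * frobNorm E := by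
    rw [hbdef]
    ring
  calc frobNorm V ≤ a / Real.sqrt (1 - δ ^ 2) + b / (1 - δ) := hVfinal
    _ ≤ (Real.sqrt 2 * α * γ * frobNorm Vp +
        Real.sqrt 2 * α * Real.sqrt (1 + θ) * frobNorm E) / Real.sqrt (1 - δ ^ 2) +
        b / (1 - δ) := by linarith [hdiv]
    _ = _ := heq

end Step

end S13

open S13 in
/-- Theorem 1 of the paper (error bound for the OSNST+HT+f-FB iterates). -/
theorem stmt13 {M N L s : ℕ} (Φ : Matrix (Fin M) (Fin N) ℂ) (hinv : IsUnit (Φ * Φᴴ))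
    (X : Matrix (Fin N) (Fin L) ℂ) (E : Matrix (Fin M) (Fin L) ℂ)
    (Y : Matrix (Fin M) (Fin L) ℂ) (hY : Y = Φ * X + E)
    (hXs : (rowSupp X).card ≤ s)
    (f : ℕ → ℕ) (hfmono : Monotone f) (hfs : ∀ j, 1 ≤ j → s ≤ f j) (hf0 : f 0 = 0)
    (k : ℕ) (hk : 1 ≤ k)
    (δ γ θ α : ℝ) (hδ0 : 0 ≤ δ) (hδ1 : δ < 1) (hγ : 0 ≤ γ) (hθ : 0 ≤ θ) (hα : 1 ≤ α)
    (hRIC : IsRIC L Φ (s + f k + f (k - 1)) δ)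
    (hPRIC : IsPRIC L Φ (s + f k + f (k - 1)) γ)
    (hURIC : IsUpperRIC L ((Φ * Φᴴ)⁻¹ * Φ) (s + f k) θ)
    (W Xs Q : ℕ → Matrix (Fin N) (Fin L) ℂ) (Rm : ℕ → Matrix (Fin L) (Fin L) ℂ)
    (T : ℕ → Finset (Fin N))
    (hW0 : W 0 = 0)
    (hNST : ∀ j, 1 ≤ j → j ≤ k →
      Xs j = W (j - 1) + Φᴴ * ((Φ * Φᴴ)⁻¹ * (Y - Φ * W (j - 1))))
    (hQR : ∀ j, 1 ≤ j → j ≤ k →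
      (Q j)ᴴ * Q j = 1 ∧ IsUnit (Rm j) ∧ Xs j = Q j * Rm j ∧
        sigmaMax (Rm j) ≤ α * sigmaMin (Rm j))
    (hTsel : ∀ j, 1 ≤ j → j ≤ k →
      (T j).card = f j ∧ ∀ i ∈ T j, ∀ m ∉ T j, vecNorm (Q j m) ≤ vecNorm (Q j i))
    (hTinv : ∀ j, 1 ≤ j → j ≤ k → IsUnit ((colSub Φ (T j))ᴴ * colSub Φ (T j)))
    (hFB : ∀ j, 1 ≤ j → j ≤ k → W j = feedback Φ (T j) (Xs j)) :
    frobNorm (X - W k) ≤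
      Real.sqrt (2 * α ^ 2 * γ ^ 2 / (1 - δ ^ 2)) ^ k * frobNorm (X - W 0) +
        (Real.sqrt (1 + δ) / (1 - δ) +
            Real.sqrt (2 * α ^ 2 * (1 + θ)) / Real.sqrt (1 - δ ^ 2)) *
          (∑ j ∈ Finset.range k, Real.sqrt (2 * α ^ 2 * γ ^ 2 / (1 - δ ^ 2)) ^ j) *
          frobNorm E := by
  classical
  rcases Nat.eq_zero_or_pos L with hL0 | hL
  · subst hL0
    have hz : ∀ (m : ℕ) (A : Matrix (Fin m) (Fin 0) ℂ), frobNorm A = 0 := by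
      intro m A
      simp [frobNorm]
    rw [hz, hz, hz]
    simp
  · set ρ : ℝ := Real.sqrt 2 * α * γ / Real.sqrt (1 - δ ^ 2) with hρ
    set κ : ℝ := Real.sqrt (1 + δ) / (1 - δ) +
        Real.sqrt 2 * α * Real.sqrt (1 + θ) / Real.sqrt (1 - δ ^ 2) with hκ
    have hδ2 : 0 < 1 - δ ^ 2 := by nlinarith
    have hρ0 : 0 ≤ ρ := by
      rw [hρ]
      apply div_nonneg _ (Real.sqrt_nonneg _)
      exact mul_nonneg (mul_nonneg (Real.sqrt_nonneg _) (by linarith)) hγ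
    -- per-step inequality
    have hstep : ∀ j : ℕ, j + 1 ≤ k →
        frobNorm (X - W (j + 1)) ≤ ρ * frobNorm (X - W j) + κ * frobNorm E := by
      intro j hjk
      have hj1 : 1 ≤ j + 1 := Nat.succ_le_succ (Nat.zero_le j)
      obtain ⟨hQorth, hRunit, hQReq, hKappa⟩ := hQR (j + 1) hj1 hjk
      obtain ⟨hTcard, hTsel'⟩ := hTsel (j + 1) hj1 hjk
      have hNST' := hNST (j + 1) hj1 hjk
      rw [Nat.add_sub_cancel] at hNST'
      have hWj1 : W (j + 1) = feedback Φ (T (j + 1)) (Xs (j + 1)) := hFB (j + 1) hj1 hjk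
      have hfj1k : f (j + 1) ≤ f k := hfmono hjk
      have hsT : s + (T (j + 1)).card ≤ s + f k := by rw [hTcard]; omega
      have hsTc : s ≤ (T (j + 1)).card := by rw [hTcard]; exact hfs (j + 1) hj1
      have hVpcard : (rowSupp (X - W j)).card ≤ s + f k + f (k - 1) := by
        rcases Nat.eq_zero_or_pos j with hj0 | hj0
        · subst hj0
          rw [hW0, sub_zero]
          omega
        · have hjfb := hFB j hj0 (by omega)
          have hsupp : rowSupp (X - W j) ⊆ rowSupp X ∪ T j := by
            refine le_trans (rowSupp_sub_subset X (W j)) ?_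
            apply Finset.union_subset_union (le_refl _)
            rw [hjfb]
            exact rowSupp_subset_of fun i hi => feedback_off_supp Φ (T j) (Xs j) hi
          have hTjcard : (T j).card = f j := (hTsel j hj0 (by omega)).1
          have hfjk : f j ≤ f (k - 1) := hfmono (by omega)
          calc (rowSupp (X - W j)).card
              ≤ (rowSupp X ∪ T j).card := Finset.card_le_card hsupp
            _ ≤ (rowSupp X).card + (T j).card := Finset.card_union_le _ _
            _ ≤ s + f (k - 1) := by rw [hTjcard]; omega
            _ ≤ s + f k + f (k - 1) := by omega
      have hsb := step_bound hinv hY hXs hδ0 hδ1 hγ hθ hα hL hRIC hPRIC hURIC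
        hsT (by omega) hsTc hVpcard hNST' hQReq hRunit hKappa hTsel'
        (hTinv (j + 1) hj1 hjk)
      rw [← hWj1] at hsb
      exact hsb
    -- induction on the number of steps
    have hind : ∀ j : ℕ, j ≤ k → frobNorm (X - W j) ≤
        ρ ^ j * frobNorm (X - W 0) + κ * (∑ i ∈ Finset.range j, ρ ^ i) * frobNorm E := by
      intro j
      induction j with
      | zero => intro _; simp
      | succ n ih =>
        intro hnk
        have h1 := hstep n hnk
        have h2 := ih (by omega)
        calc frobNorm (X - W (n + 1))
            ≤ ρ * frobNorm (X - W n) + κ * frobNorm E := h1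
          _ ≤ ρ * (ρ ^ n * frobNorm (X - W 0) +
                κ * (∑ i ∈ Finset.range n, ρ ^ i) * frobNorm E) + κ * frobNorm E := by
              apply add_le_add_left
              exact mul_le_mul_of_nonneg_left h2 hρ0
          _ = ρ ^ (n + 1) * frobNorm (X - W 0) +
              κ * (ρ * ∑ i ∈ Finset.range n, ρ ^ i + 1) * frobNorm E := by ring
          _ = ρ ^ (n + 1) * frobNorm (X - W 0) +
              κ * (∑ i ∈ Finset.range (n + 1), ρ ^ i) * frobNorm E := by
              rw [geom_sum_succ]
    have hmain := hind k (le_refl k)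
    have hc1 : Real.sqrt (2 * α ^ 2 * γ ^ 2 / (1 - δ ^ 2)) = ρ := by
      rw [hρ, Real.sqrt_div (by positivity) _, Real.sqrt_mul (by positivity),
        Real.sqrt_mul (by norm_num), Real.sqrt_sq (by linarith), Real.sqrt_sq hγ]
    have hc2 : Real.sqrt (2 * α ^ 2 * (1 + θ)) = Real.sqrt 2 * α * Real.sqrt (1 + θ) := by
      rw [Real.sqrt_mul (by positivity), Real.sqrt_mul (by norm_num),
        Real.sqrt_sq (by linarith)]
    rw [hc1, hc2]
    exact hmain
end
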